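/- arXiv:2504.19052 — 10 statements merged into one kernel-verified Lean document; each statement's English description precedes it below -/
import Mathlib

section
/- For all integers n with 1 ≤ n ≤ k+1, the n-th k-generalized Pell number equals the (2n-1)-th Fibonacci number: P_n^{(k)} = F_{2n-1}. -/
lemma fibsum (m : ℕ) : ∑ j ∈ Finset.range m, Nat.fib (2*j+1) = Nat.fib (2*m) := by
  induction m with
  | zero => simp
  | succ m ih =>
    rw [Finset.sum_range_succ, ih]
    have : 2*(m+1) = 2*m+1+1 := by ring
    rw [show 2*(m+1) = 2*m+2 by ring, Nat.fib_add_two]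

lemma fibrec (n : ℕ) (hn : 2 ≤ n) :
    Nat.fib (2*n-1) = 2 * Nat.fib (2*(n-1)-1) + Nat.fib (2*n-4) := by
  obtain ⟨m, rfl⟩ : ∃ m, n = m + 2 := ⟨n - 2, by omega⟩
  have a : Nat.fib (2*m+3) = Nat.fib (2*m+1) + Nat.fib (2*m+2) := by
    rw [show 2*m+3 = (2*m+1)+2 by ring]; exact Nat.fib_add_two
  have b : Nat.fib (2*m+2) = Nat.fib (2*m) + Nat.fib (2*m+1) := Nat.fib_add_two
  rw [show 2*(m+2)-1 = 2*m+3 by omega, show 2*(m+2-1)-1 = 2*m+1 by omega,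
    show 2*(m+2)-4 = 2*m by omega]
  omega

/-- For all integers n with 1 ≤ n ≤ k+1, the n-th k-generalized Pell number equals
the (2n-1)-th Fibonacci number. -/
theorem kPell_eq_fib (k : ℕ) (hk : 2 ≤ k) (P : ℤ → ℤ)
    (hP0 : ∀ n : ℤ, 2 - (k : ℤ) ≤ n → n ≤ 0 → P n = 0)
    (hP1 : P 1 = 1)
    (hPrec : ∀ n : ℤ, 2 ≤ n → P n = 2 * P (n - 1) + ∑ i ∈ Finset.Icc (2 : ℕ) k, P (n - i)) :
    ∀ n : ℕ, 1 ≤ n → n ≤ k + 1 → P (n : ℤ) = (Nat.fib (2 * n - 1) : ℤ) := by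
  intro n
  induction n using Nat.strong_induction_on with
  | _ n ih =>
    intro h1 h2
    rcases eq_or_lt_of_le h1 with h | h
    · simp [← h, hP1]
    · -- n ≥ 2
      have hn2 : 2 ≤ n := h
      have hrec := hPrec n (by exact_mod_cast hn2)
      -- the sum
      have hsum : ∑ i ∈ Finset.Icc (2 : ℕ) k, P ((n : ℤ) - i)
          = ∑ i ∈ Finset.Icc (2 : ℕ) (n-1), (Nat.fib (2*(n-i)-1) : ℤ) := by
        rw [← Finset.sum_subset (Finset.Icc_subset_Icc_right (by omega : n - 1 ≤ k))]
        · apply Finset.sum_congr rfl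
          intro i hi
          simp only [Finset.mem_Icc] at hi
          have hmlt : n - i < n := by omega
          have := ih (n - i) hmlt (by omega) (by omega)
          rw [show (n : ℤ) - i = ((n - i : ℕ) : ℤ) by push_cast; omega, this]
        · intro i hi hni
          simp only [Finset.mem_Icc] at hi hni
          apply hP0 <;> push_cast <;> omega
      have hreindex : ∑ i ∈ Finset.Icc (2 : ℕ) (n-1), (Nat.fib (2*(n-i)-1) : ℤ)
          = (Nat.fib (2*n-4) : ℤ) := by
        rw [← Finset.Ico_add_one_right_eq_Icc, Finset.sum_Ico_eq_sum_range]
        have : ∀ j ∈ Finset.range ((n-1+1) - 2), (Nat.fib (2*(n-(2+j))-1) : ℤ)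
            = (Nat.fib (2*((n-2)-1-j)+1) : ℤ) := by
          intro j hj
          simp only [Finset.mem_range] at hj
          congr 2
          omega
        rw [Finset.sum_congr rfl this, show (n-1+1) - 2 = n - 2 by omega,
          Finset.sum_range_reflect (fun j => (Nat.fib (2*j+1) : ℤ)) (n-2)]
        rw [← Nat.cast_sum]
        norm_cast
        rw [fibsum]
        congr 1
        omega
      rw [hrec, hsum, hreindex, show (n : ℤ) - 1 = ((n - 1 : ℕ) : ℤ) by push_cast; omega,
        ih (n-1) (by omega) (by omega) (by omega), fibrec n hn2]
      push_cast
      ring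
end

section
/- For every integer k ≥ 2, P_{k+2}^{(k)} = F_{2k+3} - 1, where F denotes the Fibonacci sequence. -/
lemma fib_odd_sum' (m : ℕ) : ∑ j ∈ Finset.range m, (Nat.fib (2*j+1) : ℤ) = Nat.fib (2*m) := by
  induction m with
  | zero => simp
  | succ m ih =>
      rw [Finset.sum_range_succ, ih, show 2*(m+1) = 2*m+1+1 by ring]
      rw [show (2*m+1+1) = 2*m + 2 by ring, Nat.fib_add_two]
      push_cast; ring

/-- For every integer k ≥ 2, P_{k+2}^{(k)} = F_{2k+3} - 1. -/
theorem kPell_kAddTwo (k : ℕ) (hk : 2 ≤ k) (P : ℤ → ℤ)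
    (hP0 : ∀ n : ℤ, 2 - (k : ℤ) ≤ n → n ≤ 0 → P n = 0)
    (hP1 : P 1 = 1)
    (hPrec : ∀ n : ℤ, 2 ≤ n → P n = 2 * P (n - 1) + ∑ i ∈ Finset.Icc (2 : ℕ) k, P (n - i)) :
    P ((k : ℤ) + 2) = (Nat.fib (2 * k + 3) : ℤ) - 1 := by
  have key : ∀ n : ℕ, 1 ≤ n → n ≤ k + 1 → P n = Nat.fib (2*n - 1) := by
    intro n
    induction n using Nat.strong_induction_on with
    | _ n ih =>
      intro h1 h2
      rcases Nat.lt_or_ge n 2 with h | h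
      · have hn1 : n = 1 := by omega
        subst hn1
        simpa using hP1
      · have hrec := hPrec n (by exact_mod_cast h)
        have hPn1 : P ((n:ℤ) - 1) = Nat.fib (2*(n-1) - 1) := by
          rw [show ((n:ℤ) - 1) = ((n-1 : ℕ) : ℤ) by omega]
          exact ih (n-1) (by omega) (by omega) (by omega)
        have e1 : ∀ i ∈ Finset.Icc 2 k, P ((n:ℤ) - i) =
            if i ≤ n - 1 then (Nat.fib (2*(n-i)-1) : ℤ) else 0 := by
          intro i hi
          simp only [Finset.mem_Icc] at hi
          by_cases hc : i ≤ n - 1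
          · rw [if_pos hc, show ((n:ℤ) - i) = ((n - i:ℕ):ℤ) by omega]
            exact ih (n-i) (by omega) (by omega) (by omega)
          · rw [if_neg hc]
            exact hP0 _ (by omega) (by omega)
        have hfilter : (Finset.Icc 2 k).filter (fun i => i ≤ n - 1) = Finset.Icc 2 (n-1) := by
          ext i
          simp only [Finset.mem_filter, Finset.mem_Icc]
          omega
        have hsum : ∑ i ∈ Finset.Icc 2 k, P ((n:ℤ) - i) = Nat.fib (2*(n-2)) := by
          rw [Finset.sum_congr rfl e1, ← Finset.sum_filter, hfilter, ← fib_odd_sum' (n-2)]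
          refine Finset.sum_bij' (fun a _ => n - 1 - a) (fun b _ => n - 1 - b) ?_ ?_ ?_ ?_ ?_
          · intro a ha; simp only [Finset.mem_Icc] at ha; simp only [Finset.mem_range]; omega
          · intro b hb; simp only [Finset.mem_range] at hb; simp only [Finset.mem_Icc]; omega
          · intro a ha; simp only [Finset.mem_Icc] at ha; omega
          · intro b hb; simp only [Finset.mem_range] at hb; omega
          · intro a ha; simp only [Finset.mem_Icc] at ha; congr 2; omega
        rw [hrec, hPn1, hsum]
        obtain ⟨m, rfl⟩ : ∃ m, n = m + 2 := ⟨n - 2, by omega⟩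
        have h3 : Nat.fib (2*(m+2)-1) = 2 * Nat.fib (2*(m+2-1)-1) + Nat.fib (2*(m+2-2)) := by
          rw [show 2*(m+2)-1 = (2*m+1)+2 by omega, Nat.fib_add_two,
            show 2*m+1+1 = 2*m+2 by omega, Nat.fib_add_two,
            show 2*(m+2-1)-1 = 2*m+1 by omega, show 2*(m+2-2) = 2*m by omega]
          ring
        rw [h3]; push_cast; ring
  have hrec := hPrec ((k:ℤ)+2) (by omega)
  have hPk1 : P ((k:ℤ) + 2 - 1) = Nat.fib (2*k+1) := by
    rw [show ((k:ℤ) + 2 - 1) = ((k+1 : ℕ) : ℤ) by push_cast; ring]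
    rw [key (k+1) (by omega) (by omega)]
    congr 2
  have hsum : ∑ i ∈ Finset.Icc 2 k, P ((k:ℤ) + 2 - i) =
      ∑ j ∈ Finset.range (k-1), (Nat.fib (2*j+3) : ℤ) := by
    have e1 : ∀ i ∈ Finset.Icc 2 k, P ((k:ℤ) + 2 - i) = (Nat.fib (2*(k+2-i)-1) : ℤ) := by
      intro i hi
      simp only [Finset.mem_Icc] at hi
      rw [show ((k:ℤ) + 2 - i) = ((k + 2 - i : ℕ) : ℤ) by omega]
      exact key (k+2-i) (by omega) (by omega)
    rw [Finset.sum_congr rfl e1]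
    refine Finset.sum_bij' (fun a _ => k - a) (fun b _ => k - b) ?_ ?_ ?_ ?_ ?_
    · intro a ha; simp only [Finset.mem_Icc] at ha; simp only [Finset.mem_range]; omega
    · intro b hb; simp only [Finset.mem_range] at hb; simp only [Finset.mem_Icc]; omega
    · intro a ha; simp only [Finset.mem_Icc] at ha; omega
    · intro b hb; simp only [Finset.mem_range] at hb; omega
    · intro a ha; simp only [Finset.mem_Icc] at ha; congr 2; omega
  have hsum2 : ∑ j ∈ Finset.range (k-1), (Nat.fib (2*j+3) : ℤ) = (Nat.fib (2*k) : ℤ) - 1 := by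
    have h0 := fib_odd_sum' k
    rw [show k = (k-1)+1 by omega, Finset.sum_range_succ'] at h0
    simp only [Nat.mul_zero, Nat.zero_add, Nat.fib_one] at h0
    have : ∀ j, 2*(j+1)+1 = 2*j+3 := fun j => by ring
    simp only [this] at h0
    rw [show ((k-1)+1) = k by omega] at h0
    push_cast at h0 ⊢
    omega
  rw [hrec, hPk1, hsum, hsum2]
  have h3 : Nat.fib (2*k+3) = 2 * Nat.fib (2*k+1) + Nat.fib (2*k) := by
    rw [show 2*k+3 = (2*k+1)+2 by ring, Nat.fib_add_two,
      show 2*k+1+1 = 2*k+2 by ring, Nat.fib_add_two]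
    ring
  rw [h3]
  push_cast
  ring
end

section
/- For every integer k ≥ 2, the polynomial Ψ_k(x) = x^k - 2x^{k-1} - x^{k-2} - ... - x - 1 has exactly one real root greater than 1. -/
private noncomputable def kPellH (k : ℕ) : ℝ → ℝ :=
  fun x => x - 2 - ∑ i ∈ Finset.range (k - 1), (x⁻¹) ^ (i + 1)

private lemma kPellH_factor (k : ℕ) (hk : 2 ≤ k) {x : ℝ} (hx : 0 < x) :
    x ^ k - 2 * x ^ (k - 1) - ∑ i ∈ Finset.range (k - 1), x ^ i
      = x ^ (k - 1) * kPellH k x := by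
  have hx0 : x ≠ 0 := ne_of_gt hx
  have hpow : x ^ (k - 1) * x = x ^ k := by
    rw [← pow_succ, Nat.sub_add_cancel (by omega : 1 ≤ k)]
  have hterm : ∀ i ∈ Finset.range (k - 1),
      x ^ (k - 1) * (x⁻¹) ^ (i + 1) = x ^ (k - 2 - i) := by
    intro i hi
    rw [Finset.mem_range] at hi
    have hexp : k - 1 = (k - 2 - i) + (i + 1) := by omega
    rw [inv_pow, hexp, pow_add, mul_assoc, mul_inv_cancel₀ (pow_ne_zero _ hx0), mul_one]
  have hsum : x ^ (k - 1) * ∑ i ∈ Finset.range (k - 1), (x⁻¹) ^ (i + 1)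
      = ∑ i ∈ Finset.range (k - 1), x ^ i := by
    rw [Finset.mul_sum, Finset.sum_congr rfl hterm]
    exact Finset.sum_range_reflect (fun i => x ^ i) (k - 1)
  unfold kPellH
  rw [mul_sub, mul_sub, hpow, hsum]
  ring

private lemma kPellH_strictMono (k : ℕ) :
    ∀ a b : ℝ, 0 < a → a < b → kPellH k a < kPellH k b := by
  intro a b ha hab
  have hb : 0 < b := ha.trans hab
  have hsum : ∑ i ∈ Finset.range (k - 1), (b⁻¹) ^ (i + 1)
      ≤ ∑ i ∈ Finset.range (k - 1), (a⁻¹) ^ (i + 1) := by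
    refine Finset.sum_le_sum fun i _ => ?_
    exact pow_le_pow_left₀ (inv_nonneg.2 hb.le) (inv_anti₀ ha hab.le) _
  unfold kPellH
  linarith

/-- For every k ≥ 2, the polynomial Ψ_k(x) = x^k - 2x^{k-1} - x^{k-2} - ⋯ - x - 1
has exactly one real root greater than 1. -/
theorem kPell_char_poly_unique_root (k : ℕ) (hk : 2 ≤ k) :
    ∃! α : ℝ, 1 < α ∧
      α ^ k - 2 * α ^ (k - 1) - ∑ i ∈ Finset.range (k - 1), α ^ i = 0 := by
  -- h(1) < 0
  have h1 : kPellH k 1 < 0 := by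
    unfold kPellH
    simp only [inv_one, one_pow, Finset.sum_const, Finset.card_range, nsmul_eq_mul, mul_one]
    have : (0 : ℝ) ≤ (k - 1 : ℕ) := Nat.cast_nonneg _
    linarith
  -- h(3) > 0
  have h3 : 0 < kPellH k 3 := by
    unfold kPellH
    have hbound : ∑ i ∈ Finset.range (k - 1), ((3 : ℝ)⁻¹) ^ (i + 1)
        ≤ ∑ i ∈ Finset.range (k - 1), (1/3 : ℝ) * (1/2) ^ i := by
      refine Finset.sum_le_sum fun i _ => ?_
      rw [pow_succ']
      have : ((3:ℝ)⁻¹) ^ i ≤ (1/2 : ℝ) ^ i := by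
        exact pow_le_pow_left₀ (by norm_num) (by norm_num) _
      nlinarith [pow_nonneg (by norm_num : (0:ℝ) ≤ 3⁻¹) i]
    have hgeo : ∑ i ∈ Finset.range (k - 1), (1/2 : ℝ) ^ i ≤ 2 :=
      sum_geometric_two_le _
    rw [← Finset.mul_sum] at hbound
    have : ∑ i ∈ Finset.range (k - 1), ((3 : ℝ)⁻¹) ^ (i + 1) ≤ 2/3 := by
      calc ∑ i ∈ Finset.range (k - 1), ((3 : ℝ)⁻¹) ^ (i + 1)
          ≤ (1/3 : ℝ) * ∑ i ∈ Finset.range (k - 1), (1/2 : ℝ) ^ i := hbound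
        _ ≤ (1/3) * 2 := by linarith
        _ = 2/3 := by norm_num
    linarith
  -- continuity of h on [1,3]
  have hcont : ContinuousOn (kPellH k) (Set.Icc (1:ℝ) 3) := by
    unfold kPellH
    refine ContinuousOn.sub (ContinuousOn.sub continuousOn_id continuousOn_const) ?_
    refine continuousOn_finset_sum _ fun i _ => ?_
    refine ContinuousOn.pow ?_ _
    exact ContinuousOn.inv₀ continuousOn_id fun x hx => by
      have := hx.1; intro h0; rw [h0] at this; linarith
  -- existence of a root of h in (1,3)
  obtain ⟨α, hα, hαroot⟩ := intermediate_value_Ioo (by norm_num : (1:ℝ) ≤ 3) hcont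
    (Set.mem_Ioo.2 ⟨h1, h3⟩)
  have hα1 : 1 < α := hα.1
  have hαpos : (0:ℝ) < α := by linarith
  refine ⟨α, ⟨hα1, ?_⟩, ?_⟩
  · rw [kPellH_factor k hk hαpos, hαroot, mul_zero]
  · rintro β ⟨hβ1, hβroot⟩
    have hβpos : (0:ℝ) < β := by linarith
    have hβh : kPellH k β = 0 := by
      rw [kPellH_factor k hk hβpos] at hβroot
      have : β ^ (k - 1) ≠ 0 := pow_ne_zero _ (ne_of_gt hβpos)
      exact (mul_eq_zero.1 hβroot).resolve_left this
    rcases lt_trichotomy β α with h | h | h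
    · have := kPellH_strictMono k β α hβpos h
      rw [hβh, hαroot] at this; linarith
    · exact h
    · have := kPellH_strictMono k α β hαpos h
      rw [hβh, hαroot] at this; linarith
end

section
/- For every integer k ≥ 2, the unique real root α = α(k) > 1 of Ψ_k(x) = x^k - 2x^{k-1} - ... - x - 1 satisfies φ²(1 - φ^{-k}) < α < φ², where φ = (1+√5)/2 is the golden ratio. -/
/-- The dominant root α of Ψ_k satisfies φ²(1-φ^{-k}) < α < φ². -/
theorem kPell_root_bounds (k : ℕ) (hk : 2 ≤ k) (α : ℝ) (hα1 : 1 < α)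
    (hroot : α ^ k - 2 * α ^ (k - 1) - ∑ i ∈ Finset.range (k - 1), α ^ i = 0) :
    ((1 + Real.sqrt 5) / 2) ^ 2 * (1 - 1 / ((1 + Real.sqrt 5) / 2) ^ k) < α ∧
      α < ((1 + Real.sqrt 5) / 2) ^ 2 := by
  set φ : ℝ := (1 + Real.sqrt 5) / 2 with hφdef
  have hs : Real.sqrt 5 ^ 2 = 5 := Real.sq_sqrt (by norm_num)
  have hs2 : 2 < Real.sqrt 5 := by nlinarith [Real.sqrt_nonneg 5]
  have hs3 : Real.sqrt 5 < 3 := by nlinarith [Real.sqrt_nonneg 5]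
  have hφ0 : (0:ℝ) < φ := by rw [hφdef]; linarith
  have hφ2 : φ < 2 := by rw [hφdef]; linarith
  have hφsq : φ ^ 2 = (3 + Real.sqrt 5) / 2 := by
    rw [hφdef]; linear_combination hs / 4
  obtain ⟨m, rfl⟩ : ∃ m, k = m + 1 := ⟨k - 1, by omega⟩
  have hm : 1 ≤ m := by omega
  simp only [Nat.add_sub_cancel] at hroot
  have hα0 : (0:ℝ) < α := by linarith
  have hαpow : 0 < α ^ m := pow_pos hα0 m
  have hsum : 0 < ∑ i ∈ Finset.range m, α ^ i :=
    Finset.sum_pos (fun i _ => pow_pos hα0 i) (Finset.nonempty_range_iff.mpr (by omega))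
  have hα2 : 2 < α := by
    by_contra h
    push_neg at h
    have h1 : 0 ≤ α ^ m * (2 - α) := mul_nonneg hαpow.le (by linarith)
    have h2 : α ^ (m + 1) = α ^ m * α := pow_succ α m
    nlinarith [hroot]
  have hkey : α ^ m * (α ^ 2 - 3 * α + 1) = -1 := by
    linear_combination (α - 1) * hroot + geom_sum_mul α m
  have hneg : α ^ 2 - 3 * α + 1 < 0 := by
    by_contra h
    push_neg at h
    nlinarith [mul_nonneg hαpow.le h]
  have hupper : α < φ ^ 2 := by
    rw [hφsq]
    nlinarith [sq_nonneg (2 * α - 3 - Real.sqrt 5), Real.sqrt_nonneg 5]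
  -- the lower bound
  set c : ℝ := α - (3 - Real.sqrt 5) / 2 with hcdef
  have hQ : (φ ^ 2 - α) * (c * α ^ m) = 1 := by
    rw [hφsq, hcdef]
    linear_combination (-1) * hkey + (α ^ m / 4) * hs
  have hc1 : 1 < φ * c := by
    rw [hφdef, hcdef]
    nlinarith [mul_pos (show (0:ℝ) < 1 + Real.sqrt 5 by linarith)
      (show (0:ℝ) < α - 1 by linarith)]
  have hφm : (0:ℝ) < φ ^ m := pow_pos hφ0 m
  have hpowle : φ ^ m ≤ α ^ m := pow_le_pow_left₀ hφ0.le (by linarith) m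
  have hchain : φ ^ m < φ * (c * α ^ m) := by nlinarith [hαpow, hc1]
  have hd : 0 < φ ^ 2 - α := by linarith
  have hfinal : (φ ^ 2 - α) * φ ^ m < φ := by
    have h4 := mul_lt_mul_of_pos_left hchain hd
    have h5 : (φ ^ 2 - α) * (φ * (c * α ^ m)) = φ := by linear_combination φ * hQ
    linarith
  constructor
  · have heq : φ ^ 2 * (1 - 1 / φ ^ (m + 1)) = φ ^ 2 - φ / φ ^ m := by
      rw [pow_succ]
      field_simp
      ring
    have h2 : φ ^ 2 - α < φ / φ ^ m := by
      rw [lt_div_iff₀ hφm]; exact hfinal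
    linarith
  · exact hupper
end

section
/- For all integers k ≥ 2 and n ≥ 1, the inequalities α^{n-2} ≤ P_n^{(k)} ≤ α^{n-1} hold, where α = α(k) is the dominant root of the characteristic polynomial of the k-generalized Pell sequence. -/
/-- For all k ≥ 2 and n ≥ 1, α^{n-2} ≤ P_n^{(k)} ≤ α^{n-1}. -/
theorem kPell_pow_bounds (k : ℕ) (hk : 2 ≤ k) (P : ℤ → ℤ)
    (hP0 : ∀ n : ℤ, 2 - (k : ℤ) ≤ n → n ≤ 0 → P n = 0)
    (hP1 : P 1 = 1)
    (hPrec : ∀ n : ℤ, 2 ≤ n → P n = 2 * P (n - 1) + ∑ i ∈ Finset.Icc (2 : ℕ) k, P (n - i))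
    (α : ℝ) (hα1 : 1 < α)
    (hroot : α ^ k - 2 * α ^ (k - 1) - ∑ i ∈ Finset.range (k - 1), α ^ i = 0) :
    ∀ n : ℕ, 1 ≤ n →
      α ^ ((n : ℤ) - 2) ≤ (P (n : ℤ) : ℝ) ∧ (P (n : ℤ) : ℝ) ≤ α ^ ((n : ℤ) - 1) := by
  have hα0 : (0:ℝ) < α := lt_trans one_pos hα1
  have hαne : α ≠ 0 := ne_of_gt hα0
  -- α > 2
  have hsum_pos : (0:ℝ) < ∑ i ∈ Finset.range (k - 1), α ^ i := by
    apply Finset.sum_pos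
    · intro i _; positivity
    · exact Finset.nonempty_range_iff.mpr (by omega)
  have hkk : α ^ k = α * α ^ (k-1) := by
    nth_rewrite 1 [show k = (k-1)+1 by omega]
    rw [pow_succ']
  have hα2 : 2 < α := by
    nlinarith [pow_pos hα0 (k-1)]
  -- the quadratic bound : α² - 3α + 1 < 0
  have hgeom := geom_sum_mul α (k-1)
  have hquad : α^2 - 3*α + 1 < 0 := by
    have hS : ∑ i ∈ Finset.range (k - 1), α ^ i = α ^ k - 2 * α ^ (k-1) := by linarith
    rw [hS] at hgeom
    -- (α^k - 2α^{k-1})(α-1) = α^{k-1} - 1, and α^k = α·α^{k-1}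
    have ha : (0:ℝ) < α ^ (k-1) := pow_pos hα0 _
    nlinarith [hgeom, hkk, ha]
  -- β = (3+√5)/2, the larger root of x² = 3x - 1
  set s : ℝ := Real.sqrt 5 with hs
  have h5 : s ^ 2 = 5 := Real.sq_sqrt (by norm_num)
  have hs0 : 0 ≤ s := Real.sqrt_nonneg 5
  set β : ℝ := (3 + s)/2 with hβ
  have hβq : β ^ 2 = 3 * β - 1 := by rw [hβ]; ring_nf; nlinarith [h5]
  have hβ2 : 2 < β := by rw [hβ]; nlinarith [h5, hs0]
  have hβ3 : β < 3 := by rw [hβ]; nlinarith [h5, hs0]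
  have hβ0 : (0:ℝ) < β := by linarith
  have hβne : β ≠ 0 := ne_of_gt hβ0
  have hαβ : α < β := by
    rw [hβ]
    nlinarith [hquad, h5, hs0, sq_nonneg (2*α - 3 - s)]
  -- the key identity for α : α^m = 2 α^{m-1} + ∑_{i=2}^{k} α^{m-i}  (zpow)
  have idα : ∀ m : ℤ, α ^ m = 2 * α ^ (m-1) + ∑ i ∈ Finset.Icc (2:ℕ) k, α ^ (m - (i:ℤ)) := by
    intro m
    have hS : ∑ i ∈ Finset.Icc (2:ℕ) k, α ^ (m - (i:ℤ)) =
        ∑ j ∈ Finset.range (k-1), α ^ (m - (k:ℤ) + (j:ℤ)) := by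
      rw [← Finset.Ico_add_one_right_eq_Icc, Finset.sum_Ico_eq_sum_range]
      rw [← Finset.sum_range_reflect (fun j => α ^ (m - (k:ℤ) + (j:ℤ))) (k-1)]
      apply Finset.sum_congr (by congr 1 <;> omega)
      intro j hj
      simp only [Finset.mem_range] at hj
      congr 1
      omega
    rw [hS]
    have h1 : α ^ m = α ^ (m - (k:ℤ)) * α ^ (k:ℕ) := by
      rw [← zpow_natCast α k, ← zpow_add₀ hαne]; congr 1; ring
    have h2 : α ^ (k:ℕ) = 2 * α^(k-1) + ∑ i ∈ Finset.range (k-1), α ^ i := by linarith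
    rw [h1, h2, mul_add, Finset.mul_sum]
    congr 1
    · rw [show (2:ℝ) * α^(k-1) = α^((k-1:ℕ):ℤ) * 2 by rw [zpow_natCast]; ring,
        ← mul_assoc, ← zpow_add₀ hαne]
      rw [show m - (k:ℤ) + ((k-1:ℕ):ℤ) = m - 1 by omega]
      ring
    · apply Finset.sum_congr rfl
      intro j _
      rw [← zpow_natCast α j, ← zpow_add₀ hαne]
  -- truncation of the recurrence sum for n ≤ k+1
  have hsum_small : ∀ n : ℕ, 2 ≤ n → n ≤ k + 1 →
      ∑ i ∈ Finset.Icc (2:ℕ) k, P ((n:ℤ) - (i:ℤ)) = ∑ j ∈ Finset.Icc (1:ℕ) (n-2), P (j:ℤ) := by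
    intro n h2 hk1
    rw [← Finset.Ico_add_one_right_eq_Icc, Finset.sum_Ico_eq_sum_range]
    have hsplit : Finset.range (k + 1 - 2) = Finset.Ico 0 (k-1) := by
      rw [Finset.range_eq_Ico]; congr 1 <;> omega
    rw [hsplit, ← Finset.sum_Ico_consecutive _ (show 0 ≤ n-2 by omega) (show n-2 ≤ k-1 by omega)]
    have hzero : ∑ i ∈ Finset.Ico (n-2) (k-1), P ((n:ℤ) - ((2 + i : ℕ):ℤ)) = 0 := by
      apply Finset.sum_eq_zero
      intro i hi
      simp only [Finset.mem_Ico] at hi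
      apply hP0 <;> push_cast <;> omega
    rw [hzero, add_zero]
    rw [show Finset.Ico 0 (n-2) = Finset.range (n-2) by rw [Finset.range_eq_Ico]]
    rw [← Finset.Ico_add_one_right_eq_Icc, Finset.sum_Ico_eq_sum_range]
    rw [← Finset.sum_range_reflect (fun j => P ((1 + j : ℕ):ℤ)) (n-2+1 - 1)]
    apply Finset.sum_congr (by congr 1 <;> omega)
    intro j hj
    simp only [Finset.mem_range] at hj
    congr 1
    omega
  -- P 2 = 2
  have hP2 : P 2 = 2 := by
    have h := hPrec 2 (le_refl _)
    have hz : ∑ i ∈ Finset.Icc (2:ℕ) k, P ((2:ℤ) - (i:ℤ)) = 0 := by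
      apply Finset.sum_eq_zero
      intro i hi
      simp only [Finset.mem_Icc] at hi
      apply hP0 <;> push_cast <;> omega
    rw [hz] at h
    simp [hP1] at h
    exact h
  -- the small-range lemma with β
  have small : ∀ n : ℕ, 2 ≤ n → n ≤ k + 1 →
      β ^ ((n:ℤ) - 2) ≤ (P (n:ℤ) : ℝ) ∧
      (β - 2) * β ^ ((n:ℤ) - 2) ≤ ((∑ j ∈ Finset.Icc (1:ℕ) (n-1), P (j:ℤ) : ℤ) : ℝ) := by
    intro n
    induction n using Nat.strong_induction_on with
    | _ n ih =>
      intro h2 hk1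
      rcases eq_or_lt_of_le h2 with h2' | h3
      · -- n = 2
        subst h2'
        constructor
        · norm_num [hP2]
        · have : Finset.Icc (1:ℕ) (2-1) = {1} := rfl
          rw [this]
          simp [hP1]
          linarith
      · -- 3 ≤ n
        have h3' : 3 ≤ n := h3
        obtain ⟨hprev1, hprev2⟩ := ih (n-1) (by omega) (by omega) (by omega)
        have hc1 : ((n-1 : ℕ):ℤ) = (n:ℤ) - 1 := by omega
        rw [hc1] at hprev1 hprev2
        have hc2 : (n:ℤ) - 1 - 2 = (n:ℤ) - 3 := by ring
        rw [hc2] at hprev1 hprev2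
        have hc3 : (n:ℕ) - 1 - 1 = n - 2 := by omega
        rw [hc3] at hprev2
        -- recurrence
        have hrec := hPrec n (by exact_mod_cast (show (2:ℤ) ≤ (n:ℤ) by omega))
        rw [show (n:ℤ) - 1 = ((n-1:ℕ):ℤ) by omega] at hrec
        rw [hsum_small n h2 hk1] at hrec
        have hrecR : (P (n:ℤ) : ℝ) = 2 * (P ((n-1:ℕ):ℤ) : ℝ) +
            ((∑ j ∈ Finset.Icc (1:ℕ) (n-2), P (j:ℤ) : ℤ) : ℝ) := by
          exact_mod_cast congrArg (Int.cast : ℤ → ℝ) hrec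
        rw [hc1] at hrecR
        have hzp : β ^ ((n:ℤ) - 2) = β ^ ((n:ℤ) - 3) * β := by
          rw [← zpow_add_one₀ hβne]; congr 1; ring
        have hpow3 : (0:ℝ) < β ^ ((n:ℤ) - 3) := zpow_pos hβ0 _
        constructor
        · rw [hrecR, hzp]; linarith [hprev1, hprev2]
        · -- sum bound
          have hsplitS : ∑ j ∈ Finset.Icc (1:ℕ) (n-1), P (j:ℤ) =
              (∑ j ∈ Finset.Icc (1:ℕ) (n-2), P (j:ℤ)) + P ((n-1:ℕ):ℤ) := by
            rw [show n - 1 = (n-2) + 1 by omega]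
            exact Finset.sum_Icc_succ_top (by omega) _
          have hgoal : ((∑ j ∈ Finset.Icc (1:ℕ) (n-1), P (j:ℤ) : ℤ) : ℝ) =
              ((∑ j ∈ Finset.Icc (1:ℕ) (n-2), P (j:ℤ) : ℤ) : ℝ) + ((P ((n:ℤ)-1) : ℤ) : ℝ) := by
            rw [hsplitS, hc1]
            push_cast
            ring
          have e : (β - 2) * (β ^ ((n:ℤ)-3) * β) =
              (β-2)*β^((n:ℤ)-3) + β^((n:ℤ)-3) := by
            linear_combination (β ^ ((n:ℤ)-3)) * hβq
          rw [hgoal, hzp, e]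
          exact add_le_add hprev2 hprev1
  -- comparison α^m ≤ β^m for m = n-2 ≥ 0
  have hcomp : ∀ n : ℕ, 2 ≤ n → α ^ ((n:ℤ) - 2) ≤ β ^ ((n:ℤ) - 2) := by
    intro n h2
    rw [show (n:ℤ) - 2 = ((n-2:ℕ):ℤ) by omega, zpow_natCast, zpow_natCast]
    exact pow_le_pow_left₀ (le_of_lt hα0) (le_of_lt hαβ) _
  -- main strong induction
  intro n
  induction n using Nat.strong_induction_on with
  | _ n ih =>
    intro hn1
    rcases eq_or_lt_of_le hn1 with h1' | h2
    · -- n = 1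
      subst h1'
      simp only [Nat.cast_one, hP1]
      have e1 : α ^ ((1:ℤ) - 2) = α⁻¹ := by
        rw [show (1:ℤ) - 2 = -1 by ring, zpow_neg, zpow_one]
      have e2 : α ^ ((1:ℤ) - 1) = 1 := by norm_num
      rw [e1, e2]
      constructor
      · push_cast
        rw [inv_le_one_iff₀]
        right; exact le_of_lt hα1
      · push_cast
        exact le_refl 1
    · have h2' : 2 ≤ n := h2
      have hrec := hPrec n (by exact_mod_cast (show (2:ℤ) ≤ (n:ℤ) by omega))
      have hrecR : (P (n:ℤ) : ℝ) = 2 * (P ((n:ℤ)-1) : ℝ) +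
          ∑ i ∈ Finset.Icc (2:ℕ) k, (P ((n:ℤ) - (i:ℤ)) : ℝ) := by
        rw [hrec]; push_cast; ring
      have hihn1 := ih (n-1) (by omega) (by omega)
      have hcn1 : ((n-1 : ℕ):ℤ) = (n:ℤ) - 1 := by omega
      rw [hcn1, show (n:ℤ)-1-2 = (n:ℤ)-3 by ring, show (n:ℤ)-1-1 = (n:ℤ)-2 by ring] at hihn1
      constructor
      · -- lower bound
        by_cases hsmall : n ≤ k + 1
        · exact le_trans (hcomp n h2') (small n h2' hsmall).1
        · -- n ≥ k + 2 : full recurrence with α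
          have hterm : ∀ i ∈ Finset.Icc (2:ℕ) k, α ^ ((n:ℤ) - 2 - (i:ℤ)) ≤ (P ((n:ℤ) - (i:ℤ)) : ℝ) := by
            intro i hi
            simp only [Finset.mem_Icc] at hi
            have hmlt : n - i < n := by omega
            have hm1 : 1 ≤ n - i := by omega
            have := (ih (n-i) hmlt hm1).1
            rw [show ((n-i : ℕ):ℤ) = (n:ℤ) - (i:ℤ) by omega] at this
            rw [show (n:ℤ) - 2 - (i:ℤ) = (n:ℤ) - (i:ℤ) - 2 by ring]
            exact this
          have hsum_le : ∑ i ∈ Finset.Icc (2:ℕ) k, α ^ ((n:ℤ) - 2 - (i:ℤ)) ≤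
              ∑ i ∈ Finset.Icc (2:ℕ) k, (P ((n:ℤ) - (i:ℤ)) : ℝ) := Finset.sum_le_sum hterm
          have hid := idα ((n:ℤ) - 2)
          rw [show (n:ℤ) - 2 - 1 = (n:ℤ) - 3 by ring] at hid
          rw [hrecR, hid]
          exact add_le_add (by linarith [hihn1.1]) hsum_le
      · -- upper bound
        have hterm : ∀ i ∈ Finset.Icc (2:ℕ) k, (P ((n:ℤ) - (i:ℤ)) : ℝ) ≤ α ^ ((n:ℤ) - 1 - (i:ℤ)) := by
          intro i hi
          simp only [Finset.mem_Icc] at hi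
          by_cases hni : n ≤ i
          · have : P ((n:ℤ) - (i:ℤ)) = 0 := by apply hP0 <;> push_cast <;> omega
            rw [this]
            push_cast
            exact le_of_lt (zpow_pos hα0 _)
          · push_neg at hni
            have := (ih (n-i) (by omega) (by omega)).2
            rw [show ((n-i : ℕ):ℤ) = (n:ℤ) - (i:ℤ) by omega] at this
            rw [show (n:ℤ) - 1 - (i:ℤ) = (n:ℤ) - (i:ℤ) - 1 by ring]
            exact this
        have hsum_le : ∑ i ∈ Finset.Icc (2:ℕ) k, (P ((n:ℤ) - (i:ℤ)) : ℝ) ≤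
            ∑ i ∈ Finset.Icc (2:ℕ) k, α ^ ((n:ℤ) - 1 - (i:ℤ)) := Finset.sum_le_sum hterm
        have hid := idα ((n:ℤ) - 1)
        rw [show (n:ℤ) - 1 - 1 = (n:ℤ) - 2 by ring] at hid
        rw [hrecR, hid]
        exact add_le_add (by linarith [hihn1.2]) hsum_le
end

section
/- Let k ≥ 2 and let α be the unique real root greater than 1 of x^k - 2x^{k-1} - ... - x - 1. Define f_k(x) = (x-1)/((k+1)x² - 3kx + k - 1). Then 0.276 < f_k(α) < 0.5. -/
/-- 0.276 < f_k(α) < 0.5 where f_k(x) = (x-1)/((k+1)x² - 3kx + k - 1). -/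
theorem kPell_fk_bounds (k : ℕ) (hk : 2 ≤ k) (α : ℝ) (hα1 : 1 < α)
    (hroot : α ^ k - 2 * α ^ (k - 1) - ∑ i ∈ Finset.range (k - 1), α ^ i = 0) :
    0.276 < (α - 1) / (((k : ℝ) + 1) * α ^ 2 - 3 * k * α + k - 1) ∧
      (α - 1) / (((k : ℝ) + 1) * α ^ 2 - 3 * k * α + k - 1) < 0.5 := by
  obtain ⟨m, rfl⟩ : ∃ m, k = m + 1 := ⟨k - 1, by omega⟩
  have hm : 1 ≤ m := by omega
  have hαpos : (0:ℝ) < α := by linarith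
  simp only [Nat.add_sub_cancel] at hroot
  have hgeom : ∑ i ∈ Finset.range m, α ^ i = (α ^ m - 1)/(α - 1) :=
    geom_sum_eq (by intro h; rw [h] at hα1; exact lt_irrefl 1 hα1) m
  rw [hgeom] at hroot
  have hne : α - 1 ≠ 0 := by intro h; nlinarith
  have hmpos : (0:ℝ) < α ^ m := pow_pos hαpos m
  -- key identity
  have hid : α ^ m * (α ^ 2 - 3 * α + 1) = -1 := by
    field_simp at hroot
    nlinarith [hroot, pow_succ α m, sq_nonneg α]
  -- α > 2
  have hαm1 : 1 < α ^ m := one_lt_pow₀ hα1 (by omega)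
  have hαself : α ≤ α ^ m := le_self_pow₀ hα1.le (by omega)
  have h2 : 2 < α := by
    by_contra h
    push_neg at h
    nlinarith [mul_le_mul_of_nonneg_left (show α ^ 2 - 3 * α + 1 ≤ -1 by nlinarith) hmpos.le]
  -- α < 2.619
  have hneg : α ^ 2 - 3 * α + 1 < 0 := by nlinarith
  have hup : α < 2.619 := by nlinarith
  -- (m+1) < α ^ m
  have hkey : ((m:ℝ) + 1) < α ^ m := by
    have h1 : (m:ℝ) + 1 ≤ 2 ^ m := by
      have h := Nat.lt_two_pow_self (n := m)
      exact_mod_cast Nat.succ_le_of_lt h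
    have h2m : (2:ℝ) ^ m < α ^ m := by
      apply pow_lt_pow_left₀ h2 (by norm_num)
      omega
    linarith
  push_cast
  set D : ℝ := ((m:ℝ) + 1 + 1) * α ^ 2 - 3 * ((m:ℝ) + 1) * α + ((m:ℝ) + 1) - 1 with hDdef
  have hq : α ^ 2 - 3 * α + 1 = -1 / α ^ m := by
    field_simp
    linarith [hid]
  have hDeq : D = (α ^ 2 - 1) - ((m:ℝ) + 1) / α ^ m := by
    rw [hDdef]
    have : ((m:ℝ) + 1) * (α ^ 2 - 3 * α + 1) = ((m:ℝ) + 1) * (-1 / α ^ m) := by rw [hq]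
    field_simp at this ⊢
    nlinarith [this]
  have hfracpos : 0 < ((m:ℝ) + 1) / α ^ m := by positivity
  have hfraclt : ((m:ℝ) + 1) / α ^ m < 1 := (div_lt_one hmpos).2 hkey
  have hDlt : D < α ^ 2 - 1 := by rw [hDeq]; linarith
  have hDgt : 2 * (α - 1) < D := by rw [hDeq]; nlinarith
  have hDpos : 0 < D := by linarith
  constructor
  · rw [lt_div_iff₀ hDpos]
    nlinarith [mul_pos (show (0:ℝ) < α - 1 by linarith) (show (0:ℝ) < 2.619 - α by linarith)]
  · rw [div_lt_iff₀ hDpos]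
    linarith
end

section
/- For all k ≥ 2 and n ≥ 2-k, |P_n^{(k)} - f_k(α)·α^n| < 1/2, where α is the dominant root of the characteristic polynomial and f_k(x) = (x-1)/((k+1)x² - 3kx + k - 1). -/
set_option maxHeartbeats 1000000 in
/-- For all k ≥ 2 and n ≥ 2-k, |P_n^{(k)} - f_k(α)·α^n| < 1/2. -/
theorem kPell_binet_error (k : ℕ) (hk : 2 ≤ k) (P : ℤ → ℤ)
    (hP0 : ∀ n : ℤ, 2 - (k : ℤ) ≤ n → n ≤ 0 → P n = 0)
    (hP1 : P 1 = 1)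
    (hPrec : ∀ n : ℤ, 2 ≤ n → P n = 2 * P (n - 1) + ∑ i ∈ Finset.Icc (2 : ℕ) k, P (n - i))
    (α : ℝ) (hα1 : 1 < α)
    (hroot : α ^ k - 2 * α ^ (k - 1) - ∑ i ∈ Finset.range (k - 1), α ^ i = 0) :
    ∀ n : ℤ, 2 - (k : ℤ) ≤ n →
      |(P n : ℝ) - (α - 1) / (((k : ℝ) + 1) * α ^ 2 - 3 * k * α + k - 1) * α ^ n| < 1 / 2 := by
  obtain ⟨J, rfl⟩ : ∃ J, k = J + 2 := ⟨k - 2, by omega⟩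
  have hα0 : (0:ℝ) < α := by linarith
  have hαne : α ≠ 0 := ne_of_gt hα0
  have hne1 : α - 1 ≠ 0 := sub_ne_zero_of_ne (ne_of_gt hα1)
  have hsub : J + 2 - 1 = J + 1 := by omega
  rw [hsub] at hroot
  have hroot' : α ^ (J+2) - 2 * α ^ (J+1) - ∑ i ∈ Finset.range (J+1), α ^ i = 0 := hroot
  have hY : (0:ℝ) < α ^ (J+1) := pow_pos hα0 _
  have hYne : α ^ (J+1) ≠ 0 := ne_of_gt hY
  have hsum1 : (1:ℝ) ≤ ∑ i ∈ Finset.range (J+1), α ^ i := by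
    calc (1:ℝ) = α ^ (0:ℕ) := (pow_zero α).symm
    _ ≤ ∑ i ∈ Finset.range (J+1), α ^ i :=
      Finset.single_le_sum (f := fun i => α ^ i) (fun i _ => (pow_pos hα0 i).le)
        (Finset.mem_range.mpr (Nat.succ_pos J))
  have hα2 : 2 < α := by
    have h : α * α ^ (J+1) - 2 * α ^ (J+1) ≥ 1 := by
      have he : α ^ (J+2) = α * α ^ (J+1) := by ring
      nlinarith [hroot']
    by_contra hle
    push_neg at hle
    nlinarith [hY, h]
  have hkey : α ^ (J+1) * (α^2 - 3*α + 1) = -1 := by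
    have hg := geom_sum_mul α (J+1)
    linear_combination (α - 1) * hroot' + hg
  have hquad : α^2 - 3*α + 1 < 0 := by
    by_contra hc
    push_neg at hc
    nlinarith [mul_nonneg hY.le hc]
  have hα3 : α < 3 := by nlinarith
  have hkpow : ((J:ℝ) + 2) < α ^ (J+1) := by
    have h1 : (J + 2 : ℕ) ≤ 2 ^ (J+1) := by
      have := Nat.lt_two_pow_self (n := J+1)
      omega
    have h2 : (2:ℝ) ^ (J+1) < α ^ (J+1) := by
      apply pow_lt_pow_left₀ hα2 (by norm_num) (by omega)
    calc ((J:ℝ)+2) ≤ (2:ℝ)^(J+1) := by exact_mod_cast h1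
    _ < α^(J+1) := h2
  -- the denominator
  set D : ℝ := ((J:ℝ)+3)*α^2 - 3*((J:ℝ)+2)*α + ((J:ℝ)+1) with hD
  have hDlow : 2*(α-1) < D := by
    have hmul : (D - 2*(α-1)) * α^(J+1) = (α-1)^2 * α^(J+1) - ((J:ℝ)+2) := by
      rw [hD]; linear_combination ((J:ℝ)+2) * hkey
    have e1 : (1:ℝ) < (α-1)^2 := by nlinarith
    have h1 : ((J:ℝ)+2) < (α-1)^2 * α^(J+1) := by
      nlinarith [mul_lt_mul_of_pos_right e1 hY, hkpow]
    nlinarith [hY, hmul, h1]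
  have hDpos : 0 < D := by linarith
  have hDne : D ≠ 0 := ne_of_gt hDpos
  have hDhigh : D < 2*α*(α-1) := by
    have hmul : (D - 2*α*(α-1)) * α^(J+1) = -(((J:ℝ)+1)) - α * α^(J+1) := by
      rw [hD]; linear_combination ((J:ℝ)+1) * hkey
    have hJ0 : (0:ℝ) ≤ (J:ℝ) := Nat.cast_nonneg J
    nlinarith [hY, mul_pos hα0 hY, hmul, hJ0]
  set g : ℝ := (α - 1)/D with hg
  have hgpos : 0 < g := div_pos (by linarith) hDpos
  have hghalf : g < 1/2 := by
    rw [hg, div_lt_iff₀ hDpos]; linarith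
  have hgalow : 1/2 < g*α := by
    rw [hg, div_mul_eq_mul_div, lt_div_iff₀ hDpos]; nlinarith
  have hgahigh : g*α < 3/2 := by nlinarith [hgpos]
  -- base cases
  have hzle1 : ∀ n : ℤ, n ≤ 0 → α ^ n ≤ 1 := fun n hn => zpow_le_one_of_nonpos₀ hα1.le hn
  have hzpos : ∀ n : ℤ, (0:ℝ) < α ^ n := fun n => zpow_pos hα0 n
  have base0 : ∀ n : ℤ, -(J:ℤ) ≤ n → n ≤ 0 → |(P n : ℝ) - g * α ^ n| < 1/2 := by
    intro n h1 h2
    rw [hP0 n (by push_cast; omega) h2]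
    rw [Int.cast_zero, zero_sub, abs_neg, abs_of_pos (mul_pos hgpos (hzpos n))]
    have h3 := hzle1 n h2
    nlinarith [hgpos, hghalf, mul_le_mul_of_nonneg_left h3 hgpos.le]
  have base1 : |(P 1 : ℝ) - g * α ^ (1:ℤ)| < 1/2 := by
    rw [hP1, zpow_one, abs_lt]
    constructor <;> push_cast <;> linarith
  -- zpow mixing
  have hzmul : ∀ (t : ℤ) (i : ℕ), α ^ t * α ^ i = α ^ (t + i) := by
    intro t i; rw [← zpow_natCast α i, ← zpow_add₀ hαne]
  have hroot2 : α^(J+2) = 2*α^(J+1) + ∑ i ∈ Finset.range (J+1), α^i := by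
    linear_combination hroot'
  have hαrec : ∀ t : ℤ, α ^ (t + (J:ℤ) + 2) = 2 * α ^ (t + (J:ℤ) + 1) +
      ∑ j ∈ Finset.range (J+1), α ^ (t + (j:ℤ)) := by
    intro t
    have e2 : α ^ (t + (J:ℤ) + 2) = α ^ t * α ^ (J+2 : ℕ) := by
      rw [hzmul t (J+2)]; congr 1; push_cast; ring
    have e1 : α ^ (t + (J:ℤ) + 1) = α ^ t * α ^ (J+1 : ℕ) := by
      rw [hzmul t (J+1)]; congr 1; push_cast; ring
    have e0 : ∀ j ∈ Finset.range (J+1), α ^ (t + (j:ℤ)) = α ^ t * α ^ j :=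
      fun j _ => (hzmul t j).symm
    rw [e2, e1, Finset.sum_congr rfl e0, ← Finset.mul_sum, hroot2]
    ring
  -- the recurrence for P, reindexed
  have hPrec' : ∀ t : ℤ, -(J:ℤ) ≤ t →
      ((P (t + (J:ℤ) + 2) : ℝ)) = 2 * (P (t + (J:ℤ) + 1) : ℝ) +
        ∑ j ∈ Finset.range (J+1), (P (t + (j:ℤ)) : ℝ) := by
    intro t ht
    have h := hPrec (t + (J:ℤ) + 2) (by omega)
    have h2 : P (t + (J:ℤ) + 2 - 1) = P (t + (J:ℤ) + 1) := by congr 1; ring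
    rw [h2] at h
    have h3 : ∑ i ∈ Finset.Icc 2 (J+2), P (t + (J:ℤ) + 2 - (i:ℤ)) =
        ∑ j ∈ Finset.range (J+1), P (t + (j:ℤ)) := by
      apply Finset.sum_nbij' (fun i => J + 2 - i) (fun j => J + 2 - j)
      · intro a ha; simp only [Finset.mem_Icc] at ha; simp only [Finset.mem_range]; omega
      · intro a ha; simp only [Finset.mem_range] at ha; simp only [Finset.mem_Icc]; omega
      · intro a ha; simp only [Finset.mem_Icc] at ha; omega
      · intro a ha; simp only [Finset.mem_range] at ha; omega
      · intro a ha; simp only [Finset.mem_Icc] at ha; congr 1; omega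
    rw [h3] at h
    have h4 := congrArg (fun z : ℤ => (z:ℝ)) h
    push_cast at h4
    exact h4
  -- the recurrence for E n := P n - g α^n
  have hErec : ∀ t : ℤ, -(J:ℤ) ≤ t →
      (P (t + (J:ℤ) + 2) : ℝ) - g * α ^ (t + (J:ℤ) + 2) =
      2 * ((P (t + (J:ℤ) + 1) : ℝ) - g * α ^ (t + (J:ℤ) + 1)) +
      ∑ j ∈ Finset.range (J+1), ((P (t + (j:ℤ)) : ℝ) - g * α ^ (t + (j:ℤ))) := by
    intro t ht
    rw [hPrec' t ht, hαrec t, Finset.sum_sub_distrib, ← Finset.mul_sum]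
    ring
  -- coefficients of ψ(x)/(x-α)
  set c : ℕ → ℝ := fun j => (1 - (α^(j+1))⁻¹)/(α-1) with hc
  have hcrec : ∀ j : ℕ, α * c (j+1) = c j + 1 := by
    intro j
    simp only [hc]
    field_simp
    ring
  have hc0 : α * c 0 = 1 := by
    simp only [hc]
    field_simp
    ring
  have hcJ : c J = α - 2 := by
    simp only [hc]
    rw [div_eq_iff hne1]
    have hinv : (α^(J+1))⁻¹ = -(α^2 - 3*α + 1) := by
      apply inv_eq_of_mul_eq_one_right
      linear_combination -hkey
    rw [hinv]; ring
  have hcmono : ∀ j : ℕ, c j < c (j+1) := by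
    intro j
    simp only [hc]
    have hA := pow_pos hα0 (j+1)
    have hB := pow_pos hα0 (j+1+1)
    have hlt : α ^ (j+1) < α ^ (j+1+1) := by
      apply pow_lt_pow_right₀ hα1 (by omega)
    have h1 : α^(j+1) * (α^(j+1))⁻¹ = 1 := mul_inv_cancel₀ (ne_of_gt hA)
    have h2 : α^(j+1+1) * (α^(j+1+1))⁻¹ = 1 := mul_inv_cancel₀ (ne_of_gt hB)
    have h : (α ^ (j+1+1))⁻¹ < (α^(j+1))⁻¹ := by
      nlinarith [inv_pos.mpr hA, inv_pos.mpr hB]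
    rw [div_lt_div_iff₀ (by linarith) (by linarith : (0:ℝ) < α - 1)]
    nlinarith [h]
  have hc0pos : 0 < c 0 := by
    simp only [hc]
    apply div_pos _ (by linarith)
    have h1 : α * α⁻¹ = 1 := mul_inv_cancel₀ hαne
    have h2 : (0:ℝ) < α⁻¹ := inv_pos.mpr hα0
    rw [pow_one]
    nlinarith
  have hcJlt : c J < 1 := by rw [hcJ]; linarith
  -- W
  set W : ℤ → ℝ := fun t => ((P (t + (J:ℤ) + 1) : ℝ) - g * α ^ (t + (J:ℤ) + 1)) +
      ∑ j ∈ Finset.range (J+1), c j * ((P (t + (j:ℤ)) : ℝ) - g * α ^ (t + (j:ℤ))) with hW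
  have hWstep : ∀ t : ℤ, -(J:ℤ) ≤ t → W (t+1) = α * W t := by
    intro t ht
    have hE := hErec t ht
    rw [Finset.sum_range_succ'] at hE
    simp only [Nat.cast_zero, add_zero] at hE
    have hre0 : ∀ j ∈ Finset.range J,
        ((P (t + ((j+1:ℕ):ℤ)) : ℝ) - g * α ^ (t + ((j+1:ℕ):ℤ)))
        = ((P (t + 1 + (j:ℤ)) : ℝ) - g * α ^ (t + 1 + (j:ℤ))) := by
      intro j hj
      rw [show t + ((j+1:ℕ):ℤ) = t + 1 + (j:ℤ) by push_cast; ring]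
    rw [Finset.sum_congr rfl hre0] at hE
    simp only [hW]
    rw [show t + 1 + (J:ℤ) + 1 = t + (J:ℤ) + 2 by ring]
    rw [Finset.sum_range_succ]
    rw [show t + 1 + (J:ℤ) = t + (J:ℤ) + 1 by ring]
    rw [mul_add, Finset.mul_sum]
    rw [Finset.sum_range_succ']
    have hre2 : ∀ j ∈ Finset.range J,
        α * (c (j+1) * ((P (t + ((j+1:ℕ):ℤ)) : ℝ) - g * α ^ (t + ((j+1:ℕ):ℤ))))
        = c j * ((P (t + 1 + (j:ℤ)) : ℝ) - g * α ^ (t + 1 + (j:ℤ)))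
          + ((P (t + 1 + (j:ℤ)) : ℝ) - g * α ^ (t + 1 + (j:ℤ))) := by
      intro j hj
      rw [show t + ((j+1:ℕ):ℤ) = t + 1 + (j:ℤ) by push_cast; ring, ← mul_assoc, hcrec j]
      ring
    rw [Finset.sum_congr rfl hre2, Finset.sum_add_distrib]
    simp only [Nat.cast_zero, add_zero]
    rw [← mul_assoc, hc0, one_mul]
    rw [hcJ]
    linear_combination hE
  -- the residue identity : W(-J) = 0
  have hz1 : α ^ (-(J:ℤ)) * α ^ (J+1) = α := by
    rw [← zpow_natCast α (J+1), ← zpow_add₀ hαne,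
      show -(J:ℤ) + ((J+1:ℕ):ℤ) = 1 by push_cast; ring, zpow_one]
  have hz0 : α ^ (-(J:ℤ)) = α * (α^(J+1))⁻¹ := by
    have h := congrArg (fun x => x * (α^(J+1))⁻¹) hz1
    simpa [mul_assoc, mul_inv_cancel₀ hYne] using h
  have hterm2 : ∀ j ∈ Finset.range (J+1),
      c j * α ^ (-(J:ℤ) + (j:ℤ)) = (α ^ (-(J:ℤ) + (j:ℤ)) - (α^(J+1))⁻¹) / (α - 1) := by
    intro j hj
    simp only [hc]
    rw [div_mul_eq_mul_div]
    congr 1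
    rw [sub_mul, one_mul]
    congr 1
    rw [← zpow_natCast α (j+1), ← zpow_natCast α (J+1), ← zpow_neg, ← zpow_neg,
      ← zpow_add₀ hαne]
    congr 1
    push_cast
    ring
  have hSig1 : ∑ j ∈ Finset.range (J+1), c j * α ^ (-(J:ℤ) + (j:ℤ)) =
      ((∑ j ∈ Finset.range (J+1), α ^ (-(J:ℤ) + (j:ℤ))) - ((J:ℝ)+1) * (α^(J+1))⁻¹) / (α-1) := by
    rw [Finset.sum_congr rfl hterm2, ← Finset.sum_div, Finset.sum_sub_distrib,
      Finset.sum_const, Finset.card_range, nsmul_eq_mul]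
    push_cast
    ring
  have hSig2 : ∑ j ∈ Finset.range (J+1), α ^ (-(J:ℤ) + (j:ℤ)) =
      α * (α^(J+1))⁻¹ * ((α^(J+1) - 1)/(α-1)) := by
    have h0 : ∀ j ∈ Finset.range (J+1), α ^ (-(J:ℤ) + (j:ℤ)) = α ^ (-(J:ℤ)) * α ^ j :=
      fun j _ => (hzmul (-(J:ℤ)) j).symm
    rw [Finset.sum_congr rfl h0, ← Finset.mul_sum, geom_sum_eq (ne_of_gt hα1), hz0]
  have hgSig : g * (α + ((α * (α^(J+1))⁻¹ * ((α^(J+1) - 1)/(α-1)) -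
      ((J:ℝ)+1) * (α^(J+1))⁻¹) / (α-1))) = 1 := by
    rw [hg]
    field_simp
    rw [hD]
    linear_combination (-(α + (α-1)*((J:ℝ)+1))) * hkey
  have hW0 : W (-(J:ℤ)) = 0 := by
    simp only [hW]
    rw [show -(J:ℤ) + (J:ℤ) + 1 = 1 by ring]
    rw [hP1, zpow_one]
    have hterm : ∀ j ∈ Finset.range (J+1),
        c j * ((P (-(J:ℤ) + (j:ℤ)) : ℝ) - g * α ^ (-(J:ℤ) + (j:ℤ)))
        = -(g * (c j * α ^ (-(J:ℤ) + (j:ℤ)))) := by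
      intro j hj
      simp only [Finset.mem_range] at hj
      rw [hP0 _ (by push_cast; omega) (by omega)]
      push_cast
      ring
    rw [Finset.sum_congr rfl hterm, Finset.sum_neg_distrib, ← Finset.mul_sum, hSig1, hSig2]
    push_cast
    linear_combination -hgSig
  have hWzero : ∀ t : ℤ, -(J:ℤ) ≤ t → W t = 0 := by
    intro t ht
    have key : ∀ m : ℕ, W (-(J:ℤ) + m) = 0 := by
      intro m
      induction m with
      | zero => simpa using hW0
      | succ m ih =>
        have hstep := hWstep (-(J:ℤ) + m) (by omega)
        rw [show -(J:ℤ) + ((m+1:ℕ):ℤ) = (-(J:ℤ) + m) + 1 by push_cast; ring, hstep, ih,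
          mul_zero]
    have h := key (t + J).toNat
    rwa [show -(J:ℤ) + ((t+(J:ℤ)).toNat : ℤ) = t by omega] at h
  -- convex combination form
  have hconv : ∀ t : ℤ, -(J:ℤ) ≤ t →
      (P (t + (J:ℤ) + 2) : ℝ) - g * α ^ (t + (J:ℤ) + 2) =
      (1 - c J) * ((P (t + (J:ℤ) + 1) : ℝ) - g * α ^ (t + (J:ℤ) + 1)) +
      (∑ j ∈ Finset.range J, (c (j+1) - c j) *
        ((P (t + 1 + (j:ℤ)) : ℝ) - g * α ^ (t + 1 + (j:ℤ)))) +
      c 0 * ((P t : ℝ) - g * α ^ t) := by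
    intro t ht
    have h1 := hWzero t ht
    have h2 := hWzero (t+1) (by omega)
    simp only [hW] at h1 h2
    rw [Finset.sum_range_succ'] at h1
    simp only [Nat.cast_zero, add_zero] at h1
    have hre : ∀ j ∈ Finset.range J,
        c (j+1) * ((P (t + ((j+1:ℕ):ℤ)) : ℝ) - g * α ^ (t + ((j+1:ℕ):ℤ)))
        = c (j+1) * ((P (t + 1 + (j:ℤ)) : ℝ) - g * α ^ (t + 1 + (j:ℤ))) := by
      intro j hj
      rw [show t + ((j+1:ℕ):ℤ) = t + 1 + (j:ℤ) by push_cast; ring]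
    rw [Finset.sum_congr rfl hre] at h1
    rw [show t + 1 + (J:ℤ) + 1 = t + (J:ℤ) + 2 by ring] at h2
    rw [Finset.sum_range_succ] at h2
    rw [show t + 1 + (J:ℤ) = t + (J:ℤ) + 1 by ring] at h2
    rw [Finset.sum_congr rfl
      (fun j _ => sub_mul (c (j+1)) (c j)
        ((P (t + 1 + (j:ℤ)) : ℝ) - g * α ^ (t + 1 + (j:ℤ)))), Finset.sum_sub_distrib]
    linear_combination h2 - h1
  -- main induction
  have main : ∀ m : ℕ, ∀ n : ℤ, -(J:ℤ) ≤ n → n ≤ -(J:ℤ) + m →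
      |(P n : ℝ) - g * α ^ n| < 1/2 := by
    intro m
    induction m with
    | zero => intro n h1 h2; exact base0 n h1 (by omega)
    | succ m ih =>
      intro n h1 h2
      by_cases hle : n ≤ -(J:ℤ) + m
      · exact ih n h1 hle
      · have hn : n = -(J:ℤ) + m + 1 := by omega
        by_cases hn0 : n ≤ 0
        · exact base0 n h1 hn0
        · by_cases hn1 : n = 1
          · rw [hn1]; exact base1
          · have hn2 : 2 ≤ n := by omega
            have hcv := hconv (n - (J:ℤ) - 2) (by omega)
            rw [show n - (J:ℤ) - 2 + (J:ℤ) + 2 = n by ring,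
                show n - (J:ℤ) - 2 + (J:ℤ) + 1 = n - 1 by ring] at hcv
            have hA : |(P (n-1) : ℝ) - g * α ^ (n-1)| < 1/2 := ih (n-1) (by omega) (by omega)
            have hB : |(P (n - (J:ℤ) - 2) : ℝ) - g * α ^ (n - (J:ℤ) - 2)| < 1/2 :=
              ih _ (by omega) (by omega)
            have hS : |∑ j ∈ Finset.range J, (c (j+1) - c j) *
                ((P (n - (J:ℤ) - 2 + 1 + (j:ℤ)) : ℝ) - g * α ^ (n - (J:ℤ) - 2 + 1 + (j:ℤ)))|
                ≤ (c J - c 0) * (1/2) := by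
              have hb : ∀ j ∈ Finset.range J, |(c (j+1) - c j) *
                  ((P (n - (J:ℤ) - 2 + 1 + (j:ℤ)) : ℝ) - g * α ^ (n - (J:ℤ) - 2 + 1 + (j:ℤ)))|
                  ≤ (c (j+1) - c j) * (1/2) := by
                intro j hj
                simp only [Finset.mem_range] at hj
                rw [abs_mul, abs_of_pos (by linarith [hcmono j] : (0:ℝ) < c (j+1) - c j)]
                apply mul_le_mul_of_nonneg_left _ (by linarith [hcmono j])
                exact (ih _ (by omega) (by omega)).le
              refine le_trans (Finset.abs_sum_le_sum_abs _ _) ?_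
              refine le_trans (Finset.sum_le_sum hb) ?_
              rw [← Finset.sum_mul, Finset.sum_range_sub c]
            rw [hcv]
            have hpos1 : (0:ℝ) < 1 - c J := by linarith
            have e1 : |(1 - c J) * ((P (n-1) : ℝ) - g * α ^ (n-1))| < (1 - c J) * (1/2) := by
              rw [abs_mul, abs_of_pos hpos1]
              exact mul_lt_mul_of_pos_left hA hpos1
            have e3 : |c 0 * ((P (n - (J:ℤ) - 2) : ℝ) - g * α ^ (n - (J:ℤ) - 2))| <
                c 0 * (1/2) := by
              rw [abs_mul, abs_of_pos hc0pos]
              exact mul_lt_mul_of_pos_left hB hc0pos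
            have habs := abs_add_three
              ((1 - c J) * ((P (n-1) : ℝ) - g * α ^ (n-1)))
              (∑ j ∈ Finset.range J, (c (j+1) - c j) *
                ((P (n - (J:ℤ) - 2 + 1 + (j:ℤ)) : ℝ) - g * α ^ (n - (J:ℤ) - 2 + 1 + (j:ℤ))))
              (c 0 * ((P (n - (J:ℤ) - 2) : ℝ) - g * α ^ (n - (J:ℤ) - 2)))
            linarith [habs, e1, hS, e3]
  intro n hn
  have hn' : -(J:ℤ) ≤ n := by push_cast at hn; omega
  have h := main (n + (J:ℤ)).toNat n hn' (by omega)
  have hDeq : (((J+2 : ℕ) : ℝ) + 1) * α ^ 2 - 3 * ((J+2 : ℕ) : ℝ) * α + ((J+2 : ℕ) : ℝ) - 1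
      = D := by
    rw [hD]; push_cast; ring
  rw [hDeq, ← hg]
  exact h
end

section
/- Let k ≥ 2, α the dominant root of the k-Pell characteristic polynomial, and n a positive integer with n < φ^{k/2}. Then |α^n - φ^{2n}| < φ^{2n}/φ^{k/2-2}. -/
lemma kPell_aux_pow (a b : ℝ) (ha : 0 ≤ a) (hab : a ≤ b) :
    ∀ n : ℕ, b ^ (n + 1) - a ^ (n + 1) ≤ (n + 1) * b ^ n * (b - a) := by
  intro n
  induction n with
  | zero => simp
  | succ n ih =>
    have hb : 0 ≤ b := le_trans ha hab
    have h1 : a ^ (n + 1) ≤ b ^ (n + 1) := pow_le_pow_left₀ ha hab _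
    have h2 : b * (b ^ (n + 1) - a ^ (n + 1)) ≤ b * ((n + 1) * b ^ n * (b - a)) :=
      mul_le_mul_of_nonneg_left ih hb
    have h3 : (b - a) * a ^ (n + 1) ≤ (b - a) * b ^ (n + 1) :=
      mul_le_mul_of_nonneg_left h1 (sub_nonneg.2 hab)
    have e1 : b ^ (n + 1 + 1) - a ^ (n + 1 + 1)
        = b * (b ^ (n + 1) - a ^ (n + 1)) + (b - a) * a ^ (n + 1) := by ring
    have e2 : ((n:ℝ) + 1 + 1) * b ^ (n + 1) * (b - a)
        = b * ((n + 1) * b ^ n * (b - a)) + (b - a) * b ^ (n + 1) := by ring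
    push_cast
    push_cast at e2 ih h2
    linarith

lemma kPell_two_lt (α : ℝ) (m : ℕ) (hα1 : 1 < α) (hm : 1 ≤ m)
    (E : α ^ m * (α ^ 2 - 3 * α + 1) = -1) : 2 < α := by
  by_contra h
  push_neg at h
  have hαm : α ≤ α ^ m := le_self_pow₀ hα1.le (by omega)
  have hprod : 0 ≤ α ^ m * ((α - 1) * (2 - α)) :=
    mul_nonneg (pow_nonneg (by linarith) m)
      (mul_nonneg (by linarith) (by linarith))
  nlinarith [E, hαm, hprod]

lemma kPell_upper (s α : ℝ) (m : ℕ) (hs : s ^ 2 = 5) (hs2 : 2 < s) (hα1 : 1 < α)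
    (E : α ^ m * (α ^ 2 - 3 * α + 1) = -1) : α < (3 + s) / 2 := by
  have hαmpos : (0:ℝ) < α ^ m := pow_pos (by linarith) m
  have hneg : α ^ 2 - 3 * α + 1 < 0 := by nlinarith
  nlinarith

lemma kPell_gap (s α : ℝ) (m : ℕ) (hs : s ^ 2 = 5) (hs2 : 2 < s) (hs3 : s < 3)
    (hα2 : 2 < α) (hup : α < (3 + s) / 2)
    (E : α ^ m * (α ^ 2 - 3 * α + 1) = -1) :
    ((3 + s) / 2 - α) * ((1 + s) / 2) ^ (m + 1) < 1 := by
  set φ : ℝ := (1 + s) / 2 with hφdef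
  have hφ0 : (0:ℝ) < φ := by rw [hφdef]; linarith
  have hαmpos : (0:ℝ) < α ^ m := pow_pos (by linarith) m
  have hφm : φ ^ m ≤ α ^ m := pow_le_pow_left₀ hφ0.le (by rw [hφdef]; linarith) m
  have hαc' : φ < α - (3 - s) / 2 := by rw [hφdef]; linarith
  have hfac : α ^ m * (((3 + s) / 2 - α) * (α - (3 - s) / 2)) = 1 := by
    linear_combination -E + (α ^ m / 4) * hs
  have hgap0 : (0:ℝ) < (3 + s) / 2 - α := by linarith
  have h5 : φ ^ m * (((3 + s) / 2 - α) * φ) ≤ α ^ m * (((3 + s) / 2 - α) * φ) := by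
    apply mul_le_mul_of_nonneg_right hφm; positivity
  have h6 : α ^ m * (((3 + s) / 2 - α) * φ) < α ^ m * (((3 + s) / 2 - α) * (α - (3 - s) / 2)) :=
    mul_lt_mul_of_pos_left (mul_lt_mul_of_pos_left hαc' hgap0) hαmpos
  calc ((3 + s) / 2 - α) * φ ^ (m + 1) = φ ^ m * (((3 + s) / 2 - α) * φ) := by ring
  _ ≤ α ^ m * (((3 + s) / 2 - α) * φ) := h5
  _ < 1 := by rw [← hfac]; exact h6

open Real in
/-- If n < φ^{k/2}, then |α^n - φ^{2n}| < φ^{2n}/φ^{k/2-2}. -/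
theorem kPell_alpha_pow_approx (k : ℕ) (hk : 2 ≤ k) (α : ℝ) (hα1 : 1 < α)
    (hroot : α ^ k - 2 * α ^ (k - 1) - ∑ i ∈ Finset.range (k - 1), α ^ i = 0)
    (n : ℕ) (hn : 0 < n)
    (hsmall : (n : ℝ) < ((1 + Real.sqrt 5) / 2) ^ ((k : ℝ) / 2)) :
    |α ^ n - ((1 + Real.sqrt 5) / 2) ^ (2 * n)| <
      ((1 + Real.sqrt 5) / 2) ^ (2 * n) /
        ((1 + Real.sqrt 5) / 2) ^ ((k : ℝ) / 2 - 2) := by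
  have hs : Real.sqrt 5 ^ 2 = 5 := Real.sq_sqrt (by norm_num)
  have hs0 : 0 ≤ Real.sqrt 5 := Real.sqrt_nonneg 5
  have hs2 : 2 < Real.sqrt 5 := by nlinarith
  have hs3 : Real.sqrt 5 < 3 := by nlinarith
  set s : ℝ := Real.sqrt 5 with hsdef
  set φ : ℝ := (1 + s) / 2 with hφdef
  have hφ1 : 1 < φ := by rw [hφdef]; linarith
  have hφ0 : (0:ℝ) < φ := by linarith
  -- derive the key identity E
  obtain ⟨m, rfl⟩ : ∃ m, k = m + 1 := ⟨k - 1, by omega⟩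
  have hm1 : 1 ≤ m := by omega
  simp only [Nat.add_sub_cancel] at hroot
  have hαne : α ≠ 1 := ne_of_gt hα1
  rw [geom_sum_eq hαne m] at hroot
  have hα1' : α - 1 ≠ 0 := sub_ne_zero.2 hαne
  have E : α ^ m * (α ^ 2 - 3 * α + 1) = -1 := by
    field_simp at hroot
    linear_combination hroot
  have hα2 : 2 < α := kPell_two_lt α m hα1 hm1 E
  have hαpos : (0:ℝ) < α := by linarith
  have hup : α < (3 + s) / 2 := kPell_upper s α m hs hs2 hα1 E
  have hgap : ((3 + s) / 2 - α) * φ ^ (m + 1) < 1 := kPell_gap s α m hs hs2 hs3 hα2 hup E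
  have hc2 : φ ^ 2 = (3 + s) / 2 := by rw [hφdef]; linear_combination hs / 4
  have hupc : α < φ ^ 2 := by rw [hc2]; exact hup
  have hc1 : (1:ℝ) ≤ φ ^ 2 := by nlinarith
  obtain ⟨p, rfl⟩ : ∃ p, n = p + 1 := ⟨n - 1, by omega⟩
  -- rewrite the goal
  have hlt : α ^ (p + 1) < (φ ^ 2) ^ (p + 1) :=
    pow_lt_pow_left₀ hupc hαpos.le (by omega)
  rw [pow_mul, abs_of_nonpos (by linarith), neg_sub]
  -- Bernoulli bound
  have bern := kPell_aux_pow α (φ ^ 2) hαpos.le hupc.le p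
  -- rpow arithmetic
  set r : ℝ := ((m + 1 : ℕ) : ℝ) with hrdef
  have hgapinv : φ ^ 2 - α < (φ ^ (m + 1))⁻¹ := by
    rw [← one_div, lt_div_iff₀ (pow_pos hφ0 (m + 1)), hc2]
    linarith [hgap]
  have hApos : (0:ℝ) < φ ^ (r / 2) := Real.rpow_pos_of_pos hφ0 _
  have hkey : φ ^ (r / 2) * (φ ^ (m + 1))⁻¹ ≤ 1 / φ ^ (r / 2 - 2) := by
    rw [← Real.rpow_natCast φ (m + 1), ← hrdef, ← Real.rpow_neg hφ0.le,
      ← Real.rpow_add hφ0, one_div, ← Real.rpow_neg hφ0.le]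
    exact (Real.rpow_le_rpow_left_iff hφ1).mpr (by linarith)
  have hmain : ((p : ℝ) + 1) * (φ ^ 2 - α) < φ ^ (r / 2) * (φ ^ (m + 1))⁻¹ := by
    have h1 : ((p : ℝ) + 1) < φ ^ (r / 2) := by push_cast at hsmall ⊢; exact hsmall
    exact mul_lt_mul'' h1 hgapinv (by positivity) (by linarith)
  have hcp : (0:ℝ) < (φ ^ 2) ^ p := pow_pos (by nlinarith) p
  have hcple : (φ ^ 2) ^ p ≤ (φ ^ 2) ^ (p + 1) := pow_le_pow_right₀ hc1 (by omega)
  have hrhs : (0:ℝ) < 1 / φ ^ (r / 2 - 2) := by positivity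
  calc (φ ^ 2) ^ (p + 1) - α ^ (p + 1) ≤ ((p : ℝ) + 1) * (φ ^ 2) ^ p * (φ ^ 2 - α) := by
        have := bern; push_cast at this ⊢; linarith
    _ = (φ ^ 2) ^ p * (((p : ℝ) + 1) * (φ ^ 2 - α)) := by ring
    _ < (φ ^ 2) ^ p * (φ ^ (r / 2) * (φ ^ (m + 1))⁻¹) :=
        (mul_lt_mul_of_pos_left hmain hcp)
    _ ≤ (φ ^ 2) ^ p * (1 / φ ^ (r / 2 - 2)) :=
        mul_le_mul_of_nonneg_left hkey hcp.le
    _ ≤ (φ ^ 2) ^ (p + 1) * (1 / φ ^ (r / 2 - 2)) :=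
        mul_le_mul_of_nonneg_right hcple hrhs.le
    _ = (φ ^ 2) ^ (p + 1) / φ ^ (r / 2 - 2) := by ring
end

section
/- Let k ≥ 2 and α the dominant root of the k-Pell characteristic polynomial. Then |f_k(α) - (5-√5)/10| < k/φ^{k-2}, where f_k(x) = (x-1)/((k+1)x² - 3kx + k - 1). -/
set_option maxHeartbeats 1000000


private lemma kPell_aux_tau (s α : ℝ) (hs2 : s^2 = 5) (h2 : 2 < α) (hαβ : α < (3+s)/2)
    (hsl : (11:ℝ)/5 < s) (hsu : s < 23/10) :
    0 < α*((3+s)/2) - α - (3+s)/2 ∧ α*((3+s)/2) - α - (3+s)/2 < 7/4 := by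
  constructor
  · nlinarith [mul_pos (show (0:ℝ) < α - 2 by linarith)
      (show (0:ℝ) < (3+s)/2 - 2 by linarith)]
  · nlinarith [mul_pos (show (0:ℝ) < (3+s)/2 - α by linarith)
      (show (0:ℝ) < (3+s)/2 - 1 by linarith)]

private lemma kPell_aux_final (kR x N D P s : ℝ) (hk : 2 ≤ kR) (hx : x * P < 2/5)
    (hN : 0 < N) (hN6 : N ≤ 6*kR) (hD : 2 ≤ D) (hP : 0 < P)
    (hsl : (11:ℝ)/5 < s) (hsu : s < 23/10) :
    x * N / (D * ((5+3*s)/2)) < kR / P := by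
  have hE : (29:ℝ)/5 ≤ (5+3*s)/2 := by linarith
  have h58 : (58:ℝ)/5 ≤ D * ((5+3*s)/2) := by
    nlinarith [mul_nonneg (show (0:ℝ) ≤ D - 2 by linarith)
      (show (0:ℝ) ≤ (5+3*s)/2 - 29/5 by linarith)]
  have hpos : (0:ℝ) < D * ((5+3*s)/2) := by linarith
  rw [div_lt_div_iff₀ hpos hP]
  have e2 : (x*P)*N < (2/5)*N := mul_lt_mul_of_pos_right hx hN
  have e3 : (2/5)*N ≤ (2/5)*(6*kR) := by linarith
  have e4 : (0:ℝ) ≤ kR * (D * ((5+3*s)/2) - 58/5) :=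
    mul_nonneg (by linarith) (by linarith)
  nlinarith [e2, e3, e4]

/-- |f_k(α) - (5-√5)/10| < k/φ^{k-2}. -/
theorem kPell_fk_alpha_approx (k : ℕ) (hk : 2 ≤ k) (α : ℝ) (hα1 : 1 < α)
    (hroot : α ^ k - 2 * α ^ (k - 1) - ∑ i ∈ Finset.range (k - 1), α ^ i = 0) :
    |(α - 1) / (((k : ℝ) + 1) * α ^ 2 - 3 * k * α + k - 1) - (5 - Real.sqrt 5) / 10| <
      (k : ℝ) / ((1 + Real.sqrt 5) / 2) ^ (k - 2) := by
  set s := Real.sqrt 5 with hs_def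
  clear_value s
  have hs0 : (0:ℝ) ≤ s := by rw [hs_def]; exact Real.sqrt_nonneg 5
  have hs2 : s ^ 2 = 5 := by rw [hs_def]; exact Real.sq_sqrt (by norm_num)
  have hs_lb : (11:ℝ)/5 < s := by nlinarith only [hs0, hs2]
  have hs_ub : s < (23:ℝ)/10 := by nlinarith only [hs0, hs2]
  have hk' : (2:ℝ) ≤ (k:ℝ) := by exact_mod_cast hk
  have hαpos : (0:ℝ) < α := by linarith
  have hApos : (0:ℝ) < α ^ (k-2) := pow_pos hαpos _
  have hk2 : k - 1 = k - 2 + 1 := by omega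
  have hk3 : k = k - 2 + 2 := by omega
  -- powers in terms of A = α^(k-2)
  have hpk1 : α ^ (k-1) = α ^ (k-2) * α := by rw [hk2, pow_succ]
  have hpk : α ^ k = α ^ (k-2) * α ^ 2 := by
    conv_lhs => rw [hk3]
    rw [pow_add]
  -- the geometric sum identity
  have hgeo : (∑ i ∈ Finset.range (k-1), α ^ i) * (α - 1) = α ^ (k-1) - 1 :=
    geom_sum_mul α (k-1)
  have hSum : (∑ i ∈ Finset.range (k-1), α ^ i) = α^(k-2) * α^2 - 2*(α^(k-2)*α) := by
    rw [← hpk1, ← hpk]; linarith [hroot]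
  have hI : (α^(k-2) * α^2 - 2*(α^(k-2)*α)) * (α - 1) = α^(k-2)*α - 1 := by
    rw [← hSum, hgeo, hpk1]
  have he : α^(k-2) * α * (3*α - α^2 - 1) = 1 := by linear_combination -hI
  have hepos : (0:ℝ) < 3*α - α^2 - 1 := by
    nlinarith only [mul_pos hApos hαpos, he]
  -- α > 2
  have hS1 : (1:ℝ) ≤ ∑ i ∈ Finset.range (k-1), α ^ i := by
    have h0 : 0 ∈ Finset.range (k-1) := Finset.mem_range.mpr (by omega)
    calc (1:ℝ) = α ^ 0 := by norm_num
      _ ≤ ∑ i ∈ Finset.range (k-1), α ^ i :=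
        Finset.single_le_sum (fun i _ => pow_nonneg hαpos.le i) h0
  have h2 : 2 < α := by
    rw [hSum] at hS1
    nlinarith only [mul_pos hApos hαpos, hS1]
  -- α < (3+s)/2
  have hαβ : α < (3+s)/2 := by
    by_contra h
    push_neg at h
    have h1 : 0 ≤ 2*α - 3 - s := by linarith
    have h2' : 0 ≤ 2*α - 3 + s := by linarith
    nlinarith only [mul_nonneg h1 h2', hepos, hs2]
  have hδpos : (0:ℝ) < (3+s)/2 - α := by linarith
  -- δ (s - δ) = e
  have hδe : ((3+s)/2 - α) * (s - ((3+s)/2 - α)) = 3*α - α^2 - 1 := by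
    linear_combination (1/4 : ℝ) * hs2
  have hδφ : ((3+s)/2 - α) * ((1+s)/2) < 3*α - α^2 - 1 := by
    nlinarith only [hδe, mul_pos hδpos (show (0:ℝ) < α - 2 by linarith)]
  -- P := φ^(k-2)
  set P := ((1 + s) / 2) ^ (k - 2) with hP_def
  clear_value P
  have hφpos : (0:ℝ) < (1+s)/2 := by linarith
  have hPpos : (0:ℝ) < P := by rw [hP_def]; exact pow_pos hφpos _
  have hφα : (1+s)/2 ≤ α := by linarith
  have hPA : P ≤ α^(k-2) := by rw [hP_def]; exact pow_le_pow_left₀ hφpos.le hφα _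
  have hPφAα : P * ((1+s)/2) ≤ α^(k-2) * α :=
    mul_le_mul hPA hφα hφpos.le hApos.le
  have heP : (3*α - α^2 - 1) * (P * ((1+s)/2)) ≤ 1 := by
    have h1 : (3*α - α^2 - 1) * (P * ((1+s)/2)) ≤ (3*α - α^2 - 1) * (α^(k-2) * α) :=
      mul_le_mul_of_nonneg_left hPφAα hepos.le
    linarith only [he, h1, (by ring : (3*α - α^2 - 1) * (α^(k-2) * α) = α^(k-2) * α * (3*α - α^2 - 1))]
  have h11 : ((3+s)/2 - α) * ((1+s)/2) * (P * ((1+s)/2)) < 1 := by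
    have hPφpos : (0:ℝ) < P * ((1+s)/2) := mul_pos hPpos hφpos
    calc ((3+s)/2 - α) * ((1+s)/2) * (P * ((1+s)/2))
        < (3*α - α^2 - 1) * (P * ((1+s)/2)) := mul_lt_mul_of_pos_right hδφ hPφpos
      _ ≤ 1 := heP
  have hφ2 : (5:ℝ)/2 < ((1+s)/2)^2 := by nlinarith only [hs2, hs_lb]
  have hδP : ((3+s)/2 - α) * P < 2/5 := by
    nlinarith only [h11, hφ2, mul_pos hδpos hPpos]
  -- k ≤ α^(k-2) * α
  have hkn : k ≤ 2 ^ (k-1) := by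
    have h' : k - 1 + 1 ≤ 2 ^ (k-1) := Nat.lt_two_pow_self (n := k-1)
    rwa [Nat.sub_add_cancel (by omega)] at h'
  have hkR : (k:ℝ) ≤ (2:ℝ) ^ (k-1) := by exact_mod_cast hkn
  have hkAα : (k:ℝ) ≤ α^(k-2) * α := by
    have h1 : (2:ℝ) ^ (k-1) = 2^(k-2) * 2 := by rw [hk2, pow_succ]
    have h2p : (2:ℝ)^(k-2) ≤ α^(k-2) := pow_le_pow_left₀ (by norm_num) h2.le _
    have h3 : (2:ℝ)^(k-2) * 2 ≤ α^(k-2) * α :=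
      mul_le_mul h2p h2.le (by norm_num) hApos.le
    linarith only [hkR, h1 ▸ hkR, h3]
  have hke : (k:ℝ) * (3*α - α^2 - 1) ≤ 1 := by
    have h1 : (k:ℝ) * (3*α - α^2 - 1) ≤ (α^(k-2) * α) * (3*α - α^2 - 1) :=
      mul_le_mul_of_nonneg_right hkAα hepos.le
    linarith only [he, h1, (by ring : (3*α - α^2 - 1) * (α^(k-2) * α) = α^(k-2) * α * (3*α - α^2 - 1))]
  -- lower bound on the denominator
  have hDα : (2:ℝ) ≤ ((k:ℝ) + 1) * α ^ 2 - 3 * k * α + k - 1 := by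
    linarith only [hke, sq_nonneg (α - 2), h2]
  have hDαpos : (0:ℝ) < ((k:ℝ) + 1) * α ^ 2 - 3 * k * α + k - 1 := by linarith
  -- value of the denominator at β
  have hDβval : ((k:ℝ)+1)*((3+s)/2)^2 - 3*k*((3+s)/2) + k - 1 = (5+3*s)/2 := by
    linear_combination ((k:ℝ)+1)/4 * hs2
  have hDβpos : (0:ℝ) < (5+3*s)/2 := by linarith
  -- the target constant equals f(β)
  have hfβ : (5 - s)/10 = ((3+s)/2 - 1)/((5+3*s)/2) := by
    rw [div_eq_div_iff (by norm_num) (by linarith : (5+3*s)/2 ≠ 0)]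
    linear_combination (-3/2 : ℝ) * hs2
  -- exact difference formula
  have hne1 : (((k:ℝ) + 1) * α ^ 2 - 3 * k * α + k - 1) ≠ 0 := ne_of_gt hDαpos
  have hne2 : (((k:ℝ)+1)*((3+s)/2)^2 - 3*k*((3+s)/2) + k - 1) ≠ 0 := by
    rw [hDβval]; linarith
  have h0 : (α-1)/(((k:ℝ) + 1) * α ^ 2 - 3 * k * α + k - 1)
      - ((3+s)/2 - 1)/(((k:ℝ)+1)*((3+s)/2)^2 - 3*k*((3+s)/2) + k - 1)
      = ((3+s)/2 - α) * (((k:ℝ)+1)*(α*((3+s)/2) - α - (3+s)/2) + 2*k + 1)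
        / ((((k:ℝ) + 1) * α ^ 2 - 3 * k * α + k - 1)
          * (((k:ℝ)+1)*((3+s)/2)^2 - 3*k*((3+s)/2) + k - 1)) := by
    rw [div_sub_div _ _ hne1 hne2,
      div_eq_div_iff (mul_ne_zero hne1 hne2) (mul_ne_zero hne1 hne2)]
    ring
  rw [hDβval] at h0
  -- bounds for N
  obtain ⟨hτpos, hτub⟩ := kPell_aux_tau s α hs2 h2 hαβ hs_lb hs_ub
  have hNpos : (0:ℝ) < ((k:ℝ)+1)*(α*((3+s)/2) - α - (3+s)/2) + 2*k + 1 := by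
    have := mul_pos (show (0:ℝ) < (k:ℝ)+1 by linarith) hτpos
    linarith only [this, hk']
  have hNub : ((k:ℝ)+1)*(α*((3+s)/2) - α - (3+s)/2) + 2*k + 1 ≤ 6*k := by
    have := mul_le_mul_of_nonneg_left hτub.le (show (0:ℝ) ≤ (k:ℝ)+1 by linarith)
    linarith only [this, hk']
  -- finish
  rw [hfβ, h0]
  have hpos : (0:ℝ) < ((3+s)/2 - α) * (((k:ℝ)+1)*(α*((3+s)/2) - α - (3+s)/2) + 2*k + 1)
      / ((((k:ℝ) + 1) * α ^ 2 - 3 * k * α + k - 1) * ((5+3*s)/2)) :=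
    div_pos (mul_pos hδpos hNpos) (mul_pos hDαpos hDβpos)
  rw [abs_of_pos hpos]
  exact kPell_aux_final (k:ℝ) ((3+s)/2 - α) _ _ P s hk' hδP hNpos hNub hDα hPpos hs_lb hs_ub
end

section
/- For all integers k ≥ 2 and n ≥ 1, P_n^{(k)} ≤ F_{2n-1}, with equality if and only if n ≤ k+1, where F denotes the Fibonacci sequence. -/
/-- For all k ≥ 2 and n ≥ 1, P_n^{(k)} ≤ F_{2n-1}, with equality iff n ≤ k+1. -/
theorem kPell_le_fib (k : ℕ) (hk : 2 ≤ k) (P : ℤ → ℤ)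
    (hP0 : ∀ n : ℤ, 2 - (k : ℤ) ≤ n → n ≤ 0 → P n = 0)
    (hP1 : P 1 = 1)
    (hPrec : ∀ n : ℤ, 2 ≤ n → P n = 2 * P (n - 1) + ∑ i ∈ Finset.Icc (2 : ℕ) k, P (n - i)) :
    ∀ n : ℕ, 1 ≤ n →
      P (n : ℤ) ≤ (Nat.fib (2 * n - 1) : ℤ) ∧
        (P (n : ℤ) = (Nat.fib (2 * n - 1) : ℤ) ↔ n ≤ k + 1) := by
  -- Fibonacci identity: fib (2m+5) + fib (2m+1) = 3 * fib (2m+3)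
  have fibid : ∀ m : ℕ, Nat.fib (2*m+5) + Nat.fib (2*m+1) = 3 * Nat.fib (2*m+3) := by
    intro m
    have h1 := Nat.fib_add_two (n := 2*m+3)
    have h2 := Nat.fib_add_two (n := 2*m+2)
    have h3 := Nat.fib_add_two (n := 2*m+1)
    simp only [show 2*m+3+2 = 2*m+5 by ring, show 2*m+3+1 = 2*m+4 by ring,
      show 2*m+2+2 = 2*m+4 by ring, show 2*m+2+1 = 2*m+3 by ring,
      show 2*m+1+2 = 2*m+3 by ring, show 2*m+1+1 = 2*m+2 by ring] at h1 h2 h3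
    omega
  -- P 2 = 2
  have hsum0 : ∀ n : ℤ, 2 ≤ n → n ≤ (k:ℤ) → (∑ i ∈ Finset.Icc (2:ℕ) k, P (n - i)) =
      ∑ i ∈ Finset.Icc (2:ℕ) k, P (n - i) := fun _ _ _ => rfl
  have hP2 : P 2 = 2 := by
    have h := hPrec 2 le_rfl
    have hz : (∑ i ∈ Finset.Icc (2:ℕ) k, P (2 - i)) = 0 := by
      apply Finset.sum_eq_zero
      intro i hi
      simp only [Finset.mem_Icc] at hi
      apply hP0 <;> push_cast <;> omega
    rw [hz] at h
    simpa [hP1] using h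
  -- telescoped recurrence: for n ≥ 3, P n = 3 P (n-1) - P (n-2) - P (n-1-k)
  have key : ∀ n : ℤ, 3 ≤ n → P n = 3 * P (n-1) - P (n-2) - P (n-1-(k:ℤ)) := by
    intro n hn
    have h1 := hPrec n (by omega)
    have h2 := hPrec (n-1) (by omega)
    have hshift : (∑ i ∈ Finset.Icc (2:ℕ) k, P (n - 1 - i)) =
        ∑ i ∈ Finset.Icc (3:ℕ) (k+1), P (n - i) := by
      rw [show Finset.Icc (3:ℕ) (k+1) = (Finset.Icc 2 k).map (addRightEmbedding 1) by
        rw [Finset.map_add_right_Icc]]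
      rw [Finset.sum_map]
      apply Finset.sum_congr rfl
      intro i _
      simp only [addRightEmbedding_apply]
      push_cast
      ring_nf
    have e1 : (∑ i ∈ Finset.Icc (2:ℕ) k, P (n - i)) =
        P (n - 2) + ∑ i ∈ Finset.Icc (3:ℕ) k, P (n - i) := by
      rw [← Finset.insert_Icc_add_one_left_eq_Icc hk, Finset.sum_insert (by simp)]
      norm_num
    have e2 : (∑ i ∈ Finset.Icc (3:ℕ) (k+1), P (n - i)) =
        (∑ i ∈ Finset.Icc (3:ℕ) k, P (n - i)) + P (n - (k+1)) := by
      rw [Finset.sum_Icc_succ_top (by omega)]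
      push_cast
      ring_nf
    have : n - 1 - (k:ℤ) = n - ((k:ℤ)+1) := by ring
    rw [hshift, e2] at h2
    rw [e1] at h1
    have h2' : P (n-1-1) = P (n-2) := by ring_nf
    rw [h2'] at h2
    rw [this]
    linarith
  -- main strong induction
  have main : ∀ n : ℕ, 1 ≤ n →
      (0 ≤ P (n:ℤ)) ∧
      (n ≤ k+1 → P (n:ℤ) = (Nat.fib (2*n-1) : ℤ)) ∧
      (k+2 ≤ n → P (n:ℤ) + 1 ≤ (Nat.fib (2*n-1) : ℤ)) ∧
      (2 ≤ n → (Nat.fib (2*(n-1)-1) : ℤ) - P ((n:ℤ)-1) ≤ (Nat.fib (2*n-1) : ℤ) - P (n:ℤ)) := by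
    intro n
    induction n using Nat.strong_induction_on with
    | _ n ih =>
      intro hn1
      match n, hn1 with
      | 1, _ =>
        simp only [Nat.cast_one]
        refine ⟨by rw [hP1]; norm_num, fun _ => by rw [hP1]; norm_num, fun h => by omega,
          fun h => by omega⟩
      | 2, _ =>
        have : ((2:ℕ):ℤ) = 2 := by norm_num
        rw [this]
        refine ⟨by rw [hP2]; norm_num, fun _ => by rw [hP2]; norm_num, fun h => by omega,
          fun _ => by norm_num [hP1, hP2]⟩
      | (m+3), _ =>
        set n := m + 3 with hndef
        have ih1 := ih (n-1) (by omega) (by omega)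
        have ih2 := ih (n-2) (by omega) (by omega)
        obtain ⟨A1, B1, C1, D1⟩ := ih1
        obtain ⟨A2, B2, C2, D2⟩ := ih2
        have hc1 : ((n:ℕ) - 1 : ℕ) = (m+2 : ℕ) := by omega
        have hc2 : ((n:ℕ) - 2 : ℕ) = (m+1 : ℕ) := by omega
        rw [hc1] at B1 C1 D1 A1
        rw [hc2] at B2 C2 A2
        have hkey := key (n:ℤ) (by push_cast; omega)
        have hcast1 : ((n:ℤ) - 1) = ((m+2 : ℕ) : ℤ) := by push_cast; omega
        have hcast2 : ((n:ℤ) - 2) = ((m+1 : ℕ) : ℤ) := by push_cast; omega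
        rw [hcast1, hcast2] at hkey
        -- value of the tail term p := P (n - 1 - k)
        have hp0 : n ≤ k + 1 → P (((m+2:ℕ):ℤ) - k) = 0 := by
          intro h
          apply hP0 <;> push_cast <;> omega
        have hp : 0 ≤ P (((m+2:ℕ):ℤ) - k) := by
          rcases le_or_gt n (k+1) with h | h
          · rw [hp0 h]
          · rcases eq_or_lt_of_le (Nat.succ_le_of_lt h) with h' | h'
            · have : (((m+2:ℕ):ℤ) - k) = 1 := by push_cast; omega
              rw [this, hP1]; norm_num
            · have hm : 2 ≤ n - 1 - k := by omega
              have := (ih (n-1-k) (by omega) (by omega)).1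
              have hc : (((m+2:ℕ):ℤ) - k) = ((n-1-k : ℕ) : ℤ) := by push_cast; omega
              rw [hc]; exact this
        -- fib identity in ℤ
        have hfib : (Nat.fib (2*n-1) : ℤ) = 3 * (Nat.fib (2*(m+2)-1) : ℤ) -
            (Nat.fib (2*(m+1)-1) : ℤ) := by
          have := fibid m
          have e1 : 2*n-1 = 2*m+5 := by omega
          have e2 : 2*(m+2)-1 = 2*m+3 := by omega
          have e3 : 2*(m+1)-1 = 2*m+1 := by omega
          rw [e1, e2, e3]; push_cast; omega
        -- E(n-1) ≥ 0 and E(n-2) ≤ E(n-1)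
        have hE1nonneg : 0 ≤ (Nat.fib (2*(m+2)-1) : ℤ) - P ((m+2:ℕ):ℤ) := by
          rcases le_or_gt (m+2) (k+1) with h | h
          · rw [B1 h]; ring_nf; norm_num
          · have := C1 (by omega); linarith
        have hD : (Nat.fib (2*((m+2)-1)-1) : ℤ) - P (((m+2:ℕ):ℤ)-1) ≤
            (Nat.fib (2*(m+2)-1) : ℤ) - P ((m+2:ℕ):ℤ) := D1 (by omega)
        have hcc : (((m+2:ℕ):ℤ)-1) = ((m+1:ℕ):ℤ) := by push_cast; ring
        have hcc2 : (2*((m+2)-1)-1) = 2*(m+1)-1 := by omega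
        rw [hcc, hcc2] at hD
        refine ⟨?_, ?_, ?_, ?_⟩
        · -- nonnegativity via the original recurrence
          have h1 := hPrec (n:ℤ) (by push_cast; omega)
          have hsum : 0 ≤ ∑ i ∈ Finset.Icc (2:ℕ) k, P ((n:ℤ) - i) := by
            apply Finset.sum_nonneg
            intro i hi
            simp only [Finset.mem_Icc] at hi
            rcases le_or_gt (i+1) n with h | h
            · have := (ih (n-i) (by omega) (by omega)).1
              have hc : ((n:ℤ) - i) = ((n-i : ℕ) : ℤ) := by push_cast; omega
              rw [hc]; exact this
            · rw [hP0 ((n:ℤ)-i) (by push_cast; omega) (by push_cast; omega)]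
          rw [h1, hcast1]
          linarith
        · intro h
          have hB1 := B1 (by omega)
          have hB2 := B2 (by omega)
          rw [hkey, hB1, hB2, hp0 h, hfib]; ring
        · intro h
          rcases eq_or_lt_of_le h with h' | h'
          · have hB1 := B1 (by omega)
            have hB2 := B2 (by omega)
            have hpv : P (((m+2:ℕ):ℤ) - k) = 1 := by
              have : (((m+2:ℕ):ℤ) - k) = 1 := by push_cast; omega
              rw [this, hP1]
            rw [hkey, hB1, hB2, hpv, hfib]; ring_nf; omega
          · have hC1 := C1 (by omega)
            rw [hkey, hfib]
            linarith
        · intro _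
          rw [hc1, hcast1, hkey, hfib]
          linarith
  intro n hn
  obtain ⟨A, B, C, _⟩ := main n hn
  rcases le_or_gt n (k+1) with h | h
  · exact ⟨le_of_eq (B h), ⟨fun _ => h, fun _ => B h⟩⟩
  · have := C (by omega)
    exact ⟨by linarith, ⟨fun he => by linarith, fun hle => by omega⟩⟩
end
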